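/- arXiv:2401.08024 — 2 statements merged into one kernel-verified Lean document; each statement's English description precedes it below -/
import Mathlib

section
/- With the initial ratio θ_0 chosen adaptively, the AdaBB stepsizes satisfy α_i ≥ 1/(√2·L) for all i ≥ 1, and hence Σ_{i=1}^k α_i ≥ k/(√2·L) for every k ≥ 1. -/
open scoped RealInnerProductSpace
open Finset Filter

noncomputable section

/-- The general AdaBB iteration (Algorithm 2 of the paper) for a convex differentiable
function `f : ℝⁿ → ℝ` that attains its minimum.  `f'` is the gradient of `f`,
`x` the iterates, `α` the stepsizes, `θ` the stepsize ratios and `lam` the short BB stepsizes. -/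
structure AdaBB (n : ℕ) where
  f : EuclideanSpace ℝ (Fin n) → ℝ
  f' : EuclideanSpace ℝ (Fin n) → EuclideanSpace ℝ (Fin n)
  x : ℕ → EuclideanSpace ℝ (Fin n)
  α : ℕ → ℝ
  θ : ℕ → ℝ
  lam : ℕ → ℝ
  hconv : ConvexOn ℝ Set.univ f
  hgrad : ∀ y, HasGradientAt f (f' y) y
  hmin : ∃ z, ∀ y, f z ≤ f y
  hα0 : 0 < α 0
  hθ0 : 0 ≤ θ 0
  hx1 : x 1 = x 0 - α 0 • f' (x 0)
  hne : ∀ k, f' (x (k + 1)) ≠ f' (x k)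
  hlam : ∀ k, lam (k + 1) =
    ⟪f' (x (k + 1)) - f' (x k), x (k + 1) - x k⟫ / ‖f' (x (k + 1)) - f' (x k)‖ ^ 2
  hlampos : ∀ k, 0 < lam (k + 1)
  hcase1 : ∀ k, α k ≤ lam (k + 1) →
    α (k + 1) = Real.sqrt (1 + θ k) * α k ∧ θ (k + 1) = α (k + 1) / α k
  hcase2 : ∀ k, α k / 2 < lam (k + 1) → lam (k + 1) < α k →
    (α (k + 1) = min (Real.sqrt (lam (k + 1) / (2 * (α k - lam (k + 1)))))
        (Real.sqrt ((1 + θ k) * lam (k + 1) / (2 * lam (k + 1) - α k))) * α k ∨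
      α (k + 1) = lam (k + 1)) ∧
    θ (k + 1) = 2 * α (k + 1) / α k - α (k + 1) / lam (k + 1)
  hcase3 : ∀ k, lam (k + 1) ≤ α k / 2 →
    (α (k + 1) = Real.sqrt (α k / (2 * (α k - lam (k + 1)))) * lam (k + 1) ∨
      α (k + 1) = lam (k + 1) / Real.sqrt 2) ∧
    θ (k + 1) = α (k + 1) / α k
  hstep : ∀ k, x (k + 2) = x (k + 1) - α (k + 1) • f' (x (k + 1))

namespace AdaBB

variable {n : ℕ}

/-- `M_k` (for `k ≥ 1`). -/
def M (S : AdaBB n) (k : ℕ) : ℝ :=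
  if S.α (k - 1) ≤ S.lam k then 0
  else if S.α (k - 1) / 2 < S.lam k then
    S.α k ^ 2 / (S.lam k * S.α (k - 1)) - S.α k ^ 2 / S.α (k - 1) ^ 2
  else S.α k ^ 2 / S.lam k ^ 2 - S.α k ^ 2 / (S.α (k - 1) * S.lam k)

/-- `P_k` for `k ≥ 1`. -/
def Paux (S : AdaBB n) (k : ℕ) : ℝ :=
  if S.α (k - 1) ≤ S.lam k then S.α k ^ 2 / S.α (k - 1)
  else if S.α (k - 1) / 2 < S.lam k then
    2 * S.α k ^ 2 / S.α (k - 1) - S.α k ^ 2 / S.lam k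
  else S.α k ^ 2 / S.α (k - 1)

/-- `P_k`, with the convention `P_0 = P_1 - α_0`. -/
def P (S : AdaBB n) (k : ℕ) : ℝ :=
  if k = 0 then S.Paux 1 - S.α 0 else S.Paux k

/-- `w_k = α_k + P_k - P_{k+1}`. -/
def w (S : AdaBB n) (k : ℕ) : ℝ := S.α k + S.P k - S.P (k + 1)

/-- The Lyapunov function `Υ_k` (for `k ≥ 1`), relative to a minimizer `xs` of `f`. -/
def Upsilon (S : AdaBB n) (xs : EuclideanSpace ℝ (Fin n)) (k : ℕ) : ℝ :=
  ‖S.x k - xs‖ ^ 2 + 2 * S.M k * ‖S.x k - S.x (k - 1)‖ ^ 2 +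
    (2 * S.α (k - 1) + 2 * S.P (k - 1)) * (S.f (S.x (k - 1)) - S.f xs)

end AdaBB

end
/-! ### Auxiliary lemmas -/

noncomputable section

open scoped RealInnerProductSpace

lemma grad_ineq {E : Type*} [NormedAddCommGroup E] [InnerProductSpace ℝ E] [CompleteSpace E]
    {f : E → ℝ} (hconv : ConvexOn ℝ Set.univ f) {g x : E}
    (hg : HasGradientAt f g x) (y : E) : f x + ⟪g, y - x⟫ ≤ f y := by
  set c : ℝ → E := fun t => t • (y - x) + x with hc
  have hφ : ConvexOn ℝ Set.univ (f ∘ c) := by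
    have := hconv.comp_affineMap (AffineMap.lineMap x y)
    have hfun : (fun t : ℝ => t • (y - x) + x) = ⇑(AffineMap.lineMap x y) := by
      funext t; rw [AffineMap.lineMap_apply, vsub_eq_sub, vadd_eq_add]
    rw [Set.preimage_univ] at this
    show ConvexOn ℝ Set.univ (f ∘ fun t : ℝ => t • (y - x) + x)
    rw [hfun]; exact this
  have hder : HasDerivAt (f ∘ c) ⟪g, y - x⟫ 0 := by
    have hcder : HasDerivAt c (y - x) 0 := by
      have : HasDerivAt (fun t : ℝ => t • (y - x)) ((1:ℝ) • (y - x)) 0 :=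
        (hasDerivAt_id 0).smul_const (y - x)
      simpa [hc] using this.add_const x
    have hx0 : c 0 = x := by simp [hc]
    have hfd : HasFDerivAt f ((InnerProductSpace.toDual ℝ E) g) (c 0) := hx0 ▸ hg.hasFDerivAt
    have := hfd.comp_hasDerivAt 0 hcder
    simpa [hc, real_inner_comm] using this
  have := hφ.le_slope_of_hasDerivAt (Set.mem_univ (0:ℝ)) (Set.mem_univ (1:ℝ)) one_pos hder
  have h2 : slope (f ∘ c) 0 1 = f y - f x := by
    simp [slope, hc, Function.comp]
  rw [h2] at this
  linarith

namespace AdaBB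

variable {n : ℕ} (S : AdaBB n)

lemma step_eq : ∀ k, S.x (k + 1) = S.x k - S.α k • S.f' (S.x k)
  | 0 => S.hx1
  | (k + 1) => S.hstep k

/-- Trichotomy of cases. -/
lemma tri (k : ℕ) : S.α k ≤ S.lam (k + 1) ∨
    (S.α k / 2 < S.lam (k + 1) ∧ S.lam (k + 1) < S.α k) ∨ S.lam (k + 1) ≤ S.α k / 2 := by
  rcases le_or_gt (S.α k) (S.lam (k + 1)) with h | h
  · exact Or.inl h
  rcases le_or_gt (S.lam (k + 1)) (S.α k / 2) with h2 | h2
  · exact Or.inr (Or.inr h2)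
  · exact Or.inr (Or.inl ⟨h2, h⟩)

lemma pos : ∀ k, 0 < S.α k ∧ 0 ≤ S.θ k := by
  intro k
  induction k with
  | zero => exact ⟨S.hα0, S.hθ0⟩
  | succ k ih =>
    obtain ⟨ha, hθ⟩ := ih
    have hl := S.hlampos k
    have h1θ : (0:ℝ) < 1 + S.θ k := by linarith
    rcases S.tri k with h1 | ⟨h2, h2'⟩ | h3
    · obtain ⟨he, hte⟩ := S.hcase1 k h1
      have hpos : 0 < S.α (k + 1) := by
        rw [he]; exact mul_pos (Real.sqrt_pos.mpr h1θ) ha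
      exact ⟨hpos, by rw [hte]; positivity⟩
    · obtain ⟨he, hte⟩ := S.hcase2 k h2 h2'
      have hpos : 0 < S.α (k + 1) := by
        rcases he with he | he
        · rw [he]
          refine mul_pos (lt_min ?_ ?_) ha
          · exact Real.sqrt_pos.mpr (div_pos hl (by linarith))
          · exact Real.sqrt_pos.mpr (div_pos (mul_pos h1θ hl) (by linarith))
        · rw [he]; exact hl
      refine ⟨hpos, ?_⟩
      have hte2 : S.θ (k + 1) = S.α (k + 1) * (2 * S.lam (k + 1) - S.α k) / (S.α k * S.lam (k + 1)) := by
        rw [hte]; field_simp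
      rw [hte2]
      apply div_nonneg _ (by positivity)
      apply mul_nonneg hpos.le (by linarith)
    · obtain ⟨he, hte⟩ := S.hcase3 k h3
      have hpos : 0 < S.α (k + 1) := by
        rcases he with he | he
        · rw [he]
          exact mul_pos (Real.sqrt_pos.mpr (div_pos ha (by linarith))) hl
        · rw [he]; exact div_pos hl (Real.sqrt_pos.mpr (by norm_num))
      exact ⟨hpos, by rw [hte]; positivity⟩

lemma alpha_pos (k : ℕ) : 0 < S.α k := (S.pos k).1
lemma theta_nonneg (k : ℕ) : 0 ≤ S.θ k := (S.pos k).2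

end AdaBB
namespace AdaBB

variable {n : ℕ} (S : AdaBB n)

set_option maxHeartbeats 1000000 in
/-- The key per-step gradient bound. -/
lemma GB (k : ℕ) :
    S.α (k + 1) ^ 2 * ‖S.f' (S.x (k + 1))‖ ^ 2 ≤
      S.Paux (k + 1) * (S.f (S.x k) - S.f (S.x (k + 1))) +
        S.M (k + 1) * ‖S.x (k + 1) - S.x k‖ ^ 2 := by
  have hap : 0 < S.α k := S.alpha_pos k
  have ha1 : 0 < S.α (k + 1) := S.alpha_pos (k + 1)
  have hlp : 0 < S.lam (k + 1) := S.hlampos k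
  set a := S.α k with ha
  set a1 := S.α (k + 1) with ha1e
  set l := S.lam (k + 1) with hle
  set g0 := S.f' (S.x k) with hg0
  set g1 := S.f' (S.x (k + 1)) with hg1
  set Δf := S.f (S.x k) - S.f (S.x (k + 1)) with hΔf
  have hΔx : S.x (k + 1) - S.x k = -(a • g0) := by
    rw [S.step_eq k]; abel
  have hxk : S.x k - S.x (k + 1) = a • g0 := by
    rw [S.step_eq k]; abel
  have hX : ‖S.x (k + 1) - S.x k‖ ^ 2 = a ^ 2 * ‖g0‖ ^ 2 := by
    rw [hΔx, norm_neg, norm_smul, mul_pow, Real.norm_eq_abs, sq_abs]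
  have hne : g1 - g0 ≠ 0 := sub_ne_zero.mpr (S.hne k)
  have hDpos : 0 < ‖g1 - g0‖ ^ 2 := pow_pos (norm_pos_iff.mpr hne) 2
  have hinner : ⟪g1 - g0, S.x (k + 1) - S.x k⟫ = -(a * (⟪g1, g0⟫ - ‖g0‖ ^ 2)) := by
    rw [hΔx, inner_neg_right, real_inner_smul_right, inner_sub_left,
      real_inner_self_eq_norm_sq]
  have hlamD : l * ‖g1 - g0‖ ^ 2 = -(a * (⟪g1, g0⟫ - ‖g0‖ ^ 2)) := by
    have h0 := S.hlam k
    rw [← hg0, ← hg1, ← hle, hinner] at h0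
    rw [h0, div_mul_cancel₀ _ hDpos.ne']
  have hDeq : ‖g1 - g0‖ ^ 2 = ‖g1‖ ^ 2 - 2 * ⟪g1, g0⟫ + ‖g0‖ ^ 2 := norm_sub_sq_real g1 g0
  have hgi1 : a * ⟪g1, g0⟫ ≤ Δf := by
    have h := grad_ineq S.hconv (S.hgrad (S.x (k + 1))) (S.x k)
    rw [hxk, real_inner_smul_right] at h
    linarith [h, hΔf.le, hΔf.ge]
  have hgi2 : Δf ≤ a * ‖g0‖ ^ 2 := by
    have h := grad_ineq S.hconv (S.hgrad (S.x k)) (S.x (k + 1))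
    rw [hΔx, inner_neg_right, real_inner_smul_right, real_inner_self_eq_norm_sq] at h
    linarith [h, hΔf.le, hΔf.ge]
  have hCS : l ^ 2 * ‖g1 - g0‖ ^ 2 ≤ a ^ 2 * ‖g0‖ ^ 2 := by
    have h1 : l * ‖g1 - g0‖ ^ 2 ≤ ‖g1 - g0‖ * (a * ‖g0‖) := by
      rw [hlamD, ← hinner]
      calc ⟪g1 - g0, S.x (k + 1) - S.x k⟫ ≤ ‖g1 - g0‖ * ‖S.x (k + 1) - S.x k‖ :=
            real_inner_le_norm _ _
        _ = ‖g1 - g0‖ * (a * ‖g0‖) := by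
            rw [hΔx, norm_neg, norm_smul, Real.norm_eq_abs, abs_of_pos hap]
    have hd : 0 < ‖g1 - g0‖ := norm_pos_iff.mpr hne
    have h2 : l * ‖g1 - g0‖ ≤ a * ‖g0‖ := by
      have := h1
      rw [pow_two] at this
      have h3 : (l * ‖g1 - g0‖) * ‖g1 - g0‖ ≤ (a * ‖g0‖) * ‖g1 - g0‖ := by
        nlinarith [this]
      exact le_of_mul_le_mul_right h3 hd
    nlinarith [h2, mul_nonneg hlp.le (norm_nonneg (g1 - g0))]
  -- case analysis
  simp only [M, Paux, Nat.add_sub_cancel, ← ha, ← ha1e, ← hle]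
  rcases S.tri k with h1 | ⟨h2, h2'⟩ | h3
  · -- case i : a ≤ l
    rw [if_pos h1, if_pos h1, zero_mul, add_zero]
    have hstar : l * ‖g1‖ ^ 2 = (2 * l - a) * ⟪g1, g0⟫ + (a - l) * ‖g0‖ ^ 2 := by
      linear_combination hlamD - l * hDeq
    have e2 : l * (a * ‖g1‖ ^ 2) = (2 * l - a) * (a * ⟪g1, g0⟫) + (a - l) * (a * ‖g0‖ ^ 2) := by
      linear_combination a * hstar
    have p1 : 0 ≤ (2 * l - a) * (Δf - a * ⟪g1, g0⟫) :=
      mul_nonneg (by linarith) (by linarith)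
    have p2 : 0 ≤ (l - a) * (a * ‖g0‖ ^ 2 - Δf) :=
      mul_nonneg (by linarith) (by linarith)
    have hc' : l * (a * ‖g1‖ ^ 2) ≤ l * Δf := by linarith [e2, p1, p2]
    have hc : a * ‖g1‖ ^ 2 ≤ Δf := le_of_mul_le_mul_left hc' hlp
    rw [← sub_nonneg]
    have heq : a1 ^ 2 / a * Δf - a1 ^ 2 * ‖g1‖ ^ 2 = (a1 ^ 2 / a) * (Δf - a * ‖g1‖ ^ 2) := by
      field_simp
    rw [heq]
    exact mul_nonneg (by positivity) (by linarith)
  · -- case ii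
    rw [if_neg (by linarith), if_pos h2, if_neg (by linarith), if_pos h2, hX]
    have hstar : l * ‖g1‖ ^ 2 = (2 * l - a) * ⟪g1, g0⟫ + (a - l) * ‖g0‖ ^ 2 := by
      linear_combination hlamD - l * hDeq
    have e2 : l * (a * ‖g1‖ ^ 2) = (2 * l - a) * (a * ⟪g1, g0⟫) + (a - l) * (a * ‖g0‖ ^ 2) := by
      linear_combination a * hstar
    have p1 : 0 ≤ (2 * l - a) * (Δf - a * ⟪g1, g0⟫) :=
      mul_nonneg (by linarith) (by linarith)
    have core : l * a * ‖g1‖ ^ 2 ≤ (2 * l - a) * Δf + (a - l) * (a * ‖g0‖ ^ 2) := by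
      linarith [e2, p1]
    rw [← sub_nonneg]
    have heq : (2 * a1 ^ 2 / a - a1 ^ 2 / l) * Δf + (a1 ^ 2 / (l * a) - a1 ^ 2 / a ^ 2) *
        (a ^ 2 * ‖g0‖ ^ 2) - a1 ^ 2 * ‖g1‖ ^ 2 =
        (a1 ^ 2 / (l * a)) * ((2 * l - a) * Δf + (a - l) * (a * ‖g0‖ ^ 2) - l * a * ‖g1‖ ^ 2) := by
      field_simp
    rw [heq]
    exact mul_nonneg (by positivity) (by linarith)
  · -- case iii
    have hla : ¬ (a ≤ l) := by linarith
    have hl2 : ¬ (a / 2 < l) := by linarith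
    rw [if_neg hla, if_neg hl2, if_neg hla, if_neg hl2, hX]
    have e3 : a * l ^ 2 * ‖g1‖ ^ 2 =
        l ^ 2 * (a * ⟪g1, g0⟫) + l ^ 2 * (a - l) * ‖g1 - g0‖ ^ 2 := by
      linear_combination (-(a * l ^ 2)) * hDeq + l ^ 2 * hlamD
    have p1 : l ^ 2 * (a * ⟪g1, g0⟫) ≤ l ^ 2 * Δf :=
      mul_le_mul_of_nonneg_left hgi1 (sq_nonneg l)
    have p2 : (a - l) * (l ^ 2 * ‖g1 - g0‖ ^ 2) ≤ (a - l) * (a ^ 2 * ‖g0‖ ^ 2) :=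
      mul_le_mul_of_nonneg_left hCS (by linarith)
    have core : a * l ^ 2 * ‖g1‖ ^ 2 ≤ l ^ 2 * Δf + (a - l) * (a ^ 2 * ‖g0‖ ^ 2) := by
      linarith [e3, p1, p2]
    rw [← sub_nonneg]
    have heq : a1 ^ 2 / a * Δf + (a1 ^ 2 / l ^ 2 - a1 ^ 2 / (a * l)) * (a ^ 2 * ‖g0‖ ^ 2) -
        a1 ^ 2 * ‖g1‖ ^ 2 =
        (a1 ^ 2 / (a * l ^ 2)) * (l ^ 2 * Δf + (a - l) * (a ^ 2 * ‖g0‖ ^ 2) -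
          a * l ^ 2 * ‖g1‖ ^ 2) := by
      field_simp
    rw [heq]
    exact mul_nonneg (by positivity) (by linarith)

end AdaBB
namespace AdaBB

variable {n : ℕ} (S : AdaBB n)

lemma sq_sqrt_mul {X c : ℝ} (hX : 0 ≤ X) : (Real.sqrt X * c) ^ 2 = X * c ^ 2 := by
  rw [mul_pow, Real.sq_sqrt hX]

/-- In case ii, option I bounds on `α (k+1) ^ 2`. -/
lemma case2_sq_bounds (k : ℕ) (h2 : S.α k / 2 < S.lam (k + 1)) (h2' : S.lam (k + 1) < S.α k)
    (he : S.α (k + 1) = min (Real.sqrt (S.lam (k + 1) / (2 * (S.α k - S.lam (k + 1)))))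
        (Real.sqrt ((1 + S.θ k) * S.lam (k + 1) / (2 * S.lam (k + 1) - S.α k))) * S.α k) :
    S.α (k + 1) ^ 2 ≤ S.lam (k + 1) / (2 * (S.α k - S.lam (k + 1))) * S.α k ^ 2 ∧
    S.α (k + 1) ^ 2 ≤ (1 + S.θ k) * S.lam (k + 1) / (2 * S.lam (k + 1) - S.α k) * S.α k ^ 2 := by
  have hap : 0 < S.α k := S.alpha_pos k
  have ha1 : 0 < S.α (k + 1) := S.alpha_pos (k + 1)
  have hl : 0 < S.lam (k + 1) := S.hlampos k
  have hθ : 0 ≤ S.θ k := S.theta_nonneg k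
  have harg1 : 0 ≤ S.lam (k + 1) / (2 * (S.α k - S.lam (k + 1))) := by
    apply div_nonneg hl.le; linarith
  have harg2 : 0 ≤ (1 + S.θ k) * S.lam (k + 1) / (2 * S.lam (k + 1) - S.α k) := by
    apply div_nonneg (by nlinarith); linarith
  constructor
  · have hb : S.α (k + 1) ≤ Real.sqrt (S.lam (k + 1) / (2 * (S.α k - S.lam (k + 1)))) * S.α k := by
      rw [he]; exact mul_le_mul_of_nonneg_right (min_le_left _ _) hap.le
    calc S.α (k + 1) ^ 2 ≤ (Real.sqrt (S.lam (k + 1) / (2 * (S.α k - S.lam (k + 1)))) * S.α k) ^ 2 :=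
          pow_le_pow_left₀ ha1.le hb 2
      _ = _ := sq_sqrt_mul harg1
  · have hb : S.α (k + 1) ≤
        Real.sqrt ((1 + S.θ k) * S.lam (k + 1) / (2 * S.lam (k + 1) - S.α k)) * S.α k := by
      rw [he]; exact mul_le_mul_of_nonneg_right (min_le_right _ _) hap.le
    calc S.α (k + 1) ^ 2 ≤ _ ^ 2 := pow_le_pow_left₀ ha1.le hb 2
      _ = _ := sq_sqrt_mul harg2

lemma M_nonneg (k : ℕ) : 0 ≤ S.M (k + 1) := by
  have hap : 0 < S.α k := S.alpha_pos k
  have ha1 : 0 < S.α (k + 1) := S.alpha_pos (k + 1)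
  have hl : 0 < S.lam (k + 1) := S.hlampos k
  simp only [M, Nat.add_sub_cancel]
  rcases S.tri k with h1 | ⟨h2, h2'⟩ | h3
  · rw [if_pos h1]
  · rw [if_neg (by linarith), if_pos h2]
    have heq : S.α (k + 1) ^ 2 / (S.lam (k + 1) * S.α k) - S.α (k + 1) ^ 2 / S.α k ^ 2 =
        S.α (k + 1) ^ 2 * (S.α k - S.lam (k + 1)) / (S.lam (k + 1) * S.α k ^ 2) := by
      field_simp
    rw [heq]
    apply div_nonneg (mul_nonneg (sq_nonneg _) (by linarith)) (by positivity)
  · rw [if_neg (by linarith), if_neg (by linarith)]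
    have heq : S.α (k + 1) ^ 2 / S.lam (k + 1) ^ 2 - S.α (k + 1) ^ 2 / (S.α k * S.lam (k + 1)) =
        S.α (k + 1) ^ 2 * (S.α k - S.lam (k + 1)) / (S.α k * S.lam (k + 1) ^ 2) := by
      field_simp
    rw [heq]
    apply div_nonneg (mul_nonneg (sq_nonneg _) (by linarith)) (by positivity)

lemma M_le_half (k : ℕ) : S.M (k + 1) ≤ 1 / 2 := by
  have hap : 0 < S.α k := S.alpha_pos k
  have ha1 : 0 < S.α (k + 1) := S.alpha_pos (k + 1)
  have hl : 0 < S.lam (k + 1) := S.hlampos k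
  simp only [M, Nat.add_sub_cancel]
  rcases S.tri k with h1 | ⟨h2, h2'⟩ | h3
  · rw [if_pos h1]; norm_num
  · rw [if_neg (by linarith), if_pos h2]
    have core : 2 * S.α (k + 1) ^ 2 * (S.α k - S.lam (k + 1)) ≤ S.lam (k + 1) * S.α k ^ 2 := by
      rcases (S.hcase2 k h2 h2').1 with he | he
      · have := (S.case2_sq_bounds k h2 h2' he).1
        rw [div_mul_eq_mul_div, le_div_iff₀ (by linarith)] at this
        linarith
      · rw [he]; nlinarith [sq_nonneg (S.α k - 2 * S.lam (k + 1))]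
    rw [← sub_nonneg]
    have heq : 1 / 2 - (S.α (k + 1) ^ 2 / (S.lam (k + 1) * S.α k) - S.α (k + 1) ^ 2 / S.α k ^ 2) =
        (S.lam (k + 1) * S.α k ^ 2 - 2 * S.α (k + 1) ^ 2 * (S.α k - S.lam (k + 1))) /
          (2 * S.lam (k + 1) * S.α k ^ 2) := by
      field_simp
    rw [heq]
    exact div_nonneg (by linarith) (by positivity)
  · rw [if_neg (by linarith), if_neg (by linarith)]
    have core : 2 * S.α (k + 1) ^ 2 * (S.α k - S.lam (k + 1)) ≤ S.α k * S.lam (k + 1) ^ 2 := by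
      rcases (S.hcase3 k h3).1 with he | he
      · have hsq : S.α (k + 1) ^ 2 = S.α k / (2 * (S.α k - S.lam (k + 1))) * S.lam (k + 1) ^ 2 := by
          rw [he, sq_sqrt_mul (by apply div_nonneg hap.le; linarith)]
        have h0 : S.α k - S.lam (k + 1) ≠ 0 := by linarith
        have heq2 : 2 * (S.α k / (2 * (S.α k - S.lam (k + 1))) * S.lam (k + 1) ^ 2) *
            (S.α k - S.lam (k + 1)) = S.α k * S.lam (k + 1) ^ 2 := by
          field_simp
        rw [hsq, heq2]
      · have hsq : S.α (k + 1) ^ 2 = S.lam (k + 1) ^ 2 / 2 := by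
          rw [he, div_pow, Real.sq_sqrt (by norm_num : (0:ℝ) ≤ 2)]
        rw [hsq]; nlinarith
    rw [← sub_nonneg]
    have heq : 1 / 2 - (S.α (k + 1) ^ 2 / S.lam (k + 1) ^ 2 - S.α (k + 1) ^ 2 / (S.α k * S.lam (k + 1))) =
        (S.α k * S.lam (k + 1) ^ 2 - 2 * S.α (k + 1) ^ 2 * (S.α k - S.lam (k + 1))) /
          (2 * S.α k * S.lam (k + 1) ^ 2) := by
      field_simp
    rw [heq]
    exact div_nonneg (by linarith) (by positivity)

lemma Paux_nonneg (k : ℕ) : 0 ≤ S.Paux (k + 1) := by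
  have hap : 0 < S.α k := S.alpha_pos k
  have hl : 0 < S.lam (k + 1) := S.hlampos k
  simp only [Paux, Nat.add_sub_cancel]
  rcases S.tri k with h1 | ⟨h2, h2'⟩ | h3
  · rw [if_pos h1]; positivity
  · rw [if_neg (by linarith), if_pos h2]
    have heq : 2 * S.α (k + 1) ^ 2 / S.α k - S.α (k + 1) ^ 2 / S.lam (k + 1) =
        S.α (k + 1) ^ 2 * (2 * S.lam (k + 1) - S.α k) / (S.α k * S.lam (k + 1)) := by
      field_simp
    rw [heq]
    apply div_nonneg (mul_nonneg (sq_nonneg _) (by linarith)) (by positivity)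
  · rw [if_neg (by linarith), if_neg (by linarith)]; positivity

lemma Paux_eq (k : ℕ) : S.Paux (k + 1) = S.θ (k + 1) * S.α (k + 1) := by
  have hap : 0 < S.α k := S.alpha_pos k
  have hl : 0 < S.lam (k + 1) := S.hlampos k
  simp only [Paux, Nat.add_sub_cancel]
  rcases S.tri k with h1 | ⟨h2, h2'⟩ | h3
  · rw [if_pos h1, (S.hcase1 k h1).2]; field_simp
  · rw [if_neg (by linarith), if_pos h2, (S.hcase2 k h2 h2').2]; field_simp
  · rw [if_neg (by linarith), if_neg (by linarith), (S.hcase3 k h3).2]; field_simp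

lemma Paux_succ_le (k : ℕ) : S.Paux (k + 1) ≤ S.α k + S.θ k * S.α k := by
  have hap : 0 < S.α k := S.alpha_pos k
  have hl : 0 < S.lam (k + 1) := S.hlampos k
  have hθ : 0 ≤ S.θ k := S.theta_nonneg k
  simp only [Paux, Nat.add_sub_cancel]
  rcases S.tri k with h1 | ⟨h2, h2'⟩ | h3
  · rw [if_pos h1]
    have hsq : S.α (k + 1) ^ 2 = (1 + S.θ k) * S.α k ^ 2 := by
      rw [(S.hcase1 k h1).1, sq_sqrt_mul (by linarith)]
    rw [hsq, ← sub_nonneg]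
    have heq : S.α k + S.θ k * S.α k - (1 + S.θ k) * S.α k ^ 2 / S.α k = 0 := by
      field_simp; ring
    rw [heq]
  · rw [if_neg (by linarith), if_pos h2]
    have core : S.α (k + 1) ^ 2 * (2 * S.lam (k + 1) - S.α k) ≤
        (1 + S.θ k) * S.lam (k + 1) * S.α k ^ 2 := by
      rcases (S.hcase2 k h2 h2').1 with he | he
      · have := (S.case2_sq_bounds k h2 h2' he).2
        rw [div_mul_eq_mul_div, le_div_iff₀ (by linarith)] at this
        linarith
      · rw [he]
        have q1 : S.lam (k + 1) * (2 * S.lam (k + 1) - S.α k) ≤ S.α k ^ 2 := by nlinarith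
        have q2 := mul_le_mul_of_nonneg_left q1 hl.le
        have q3 : 0 ≤ S.θ k * (S.lam (k + 1) * S.α k ^ 2) :=
          mul_nonneg hθ (mul_nonneg hl.le (sq_nonneg _))
        nlinarith [q2, q3]
    rw [← sub_nonneg]
    have heq : S.α k + S.θ k * S.α k - (2 * S.α (k + 1) ^ 2 / S.α k - S.α (k + 1) ^ 2 / S.lam (k + 1)) =
        ((1 + S.θ k) * S.lam (k + 1) * S.α k ^ 2 - S.α (k + 1) ^ 2 * (2 * S.lam (k + 1) - S.α k)) /
          (S.α k * S.lam (k + 1)) := by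
      field_simp
    rw [heq]
    exact div_nonneg (by linarith) (by positivity)
  · rw [if_neg (by linarith), if_neg (by linarith)]
    have core : S.α (k + 1) ^ 2 ≤ (1 + S.θ k) * S.α k ^ 2 := by
      rcases (S.hcase3 k h3).1 with he | he
      · have hsq : S.α (k + 1) ^ 2 = S.α k / (2 * (S.α k - S.lam (k + 1))) * S.lam (k + 1) ^ 2 := by
          rw [he, sq_sqrt_mul (by apply div_nonneg hap.le; linarith)]
        have harg : S.α k / (2 * (S.α k - S.lam (k + 1))) ≤ 1 := by
          rw [div_le_one (by linarith)]; linarith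
        rw [hsq]
        nlinarith [sq_nonneg (S.lam (k + 1)), hl]
      · have hsq : S.α (k + 1) ^ 2 = S.lam (k + 1) ^ 2 / 2 := by
          rw [he, div_pow, Real.sq_sqrt (by norm_num : (0:ℝ) ≤ 2)]
        rw [hsq]; nlinarith
    rw [← sub_nonneg]
    have heq : S.α k + S.θ k * S.α k - S.α (k + 1) ^ 2 / S.α k =
        ((1 + S.θ k) * S.α k ^ 2 - S.α (k + 1) ^ 2) / S.α k := by
      field_simp
    rw [heq]
    exact div_nonneg (by linarith) hap.le

lemma P_succ_le (k : ℕ) : S.P (k + 1) ≤ S.α k + S.P k := by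
  cases k with
  | zero => simp [P]
  | succ j =>
    have hPk : S.P (j + 1) = S.θ (j + 1) * S.α (j + 1) := by
      rw [P, if_neg (by omega), S.Paux_eq j]
    have hP1 : S.P (j + 2) = S.Paux (j + 2) := by rw [P, if_neg (by omega)]
    rw [hPk, hP1]
    exact S.Paux_succ_le (j + 1)

lemma aP_nonneg : ∀ j, 0 ≤ S.α j + S.P j
  | 0 => by
    have h := S.Paux_nonneg 0
    have h2 : S.P 0 = S.Paux 1 - S.α 0 := by simp [P]
    rw [h2]
    exact le_of_le_of_eq h (by ring)
  | (j + 1) => by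
    have := S.Paux_nonneg j
    have := S.alpha_pos (j + 1)
    rw [P, if_neg (by omega)]
    linarith

end AdaBB
namespace AdaBB

variable {n : ℕ} (S : AdaBB n)

/-- In cases ii and iii, `α (k+1) ≥ lam (k+1) / √2`. -/
lemma alpha_ge_half (k : ℕ) (h : S.lam (k + 1) < S.α k) :
    S.lam (k + 1) / Real.sqrt 2 ≤ S.α (k + 1) := by
  have hap : 0 < S.α k := S.alpha_pos k
  have ha1 : 0 < S.α (k + 1) := S.alpha_pos (k + 1)
  have hl : 0 < S.lam (k + 1) := S.hlampos k
  have hθ : 0 ≤ S.θ k := S.theta_nonneg k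
  have hs2 : (0:ℝ) < Real.sqrt 2 := Real.sqrt_pos.mpr (by norm_num)
  have htar : (S.lam (k + 1) / Real.sqrt 2) ^ 2 = S.lam (k + 1) ^ 2 / 2 := by
    rw [div_pow, Real.sq_sqrt (by norm_num : (0:ℝ) ≤ 2)]
  have hsq : S.lam (k + 1) ^ 2 / 2 ≤ S.α (k + 1) ^ 2 → S.lam (k + 1) / Real.sqrt 2 ≤ S.α (k + 1) := by
    intro hh
    refine le_of_pow_le_pow_left₀ two_ne_zero ha1.le ?_
    rw [htar]; exact hh
  rcases S.tri k with h1 | ⟨h2, h2'⟩ | h3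
  · linarith
  · rcases (S.hcase2 k h2 h2').1 with he | he
    · apply hsq
      have hb1 : S.lam (k + 1) ^ 2 / 2 ≤ S.lam (k + 1) / (2 * (S.α k - S.lam (k + 1))) * S.α k ^ 2 := by
        rw [div_mul_eq_mul_div, le_div_iff₀ (by linarith), div_mul_eq_mul_div, div_le_iff₀ (by norm_num)]
        have q1 : S.lam (k + 1) * (S.α k - S.lam (k + 1)) ≤ S.α k ^ 2 := by
          nlinarith [sq_nonneg (S.α k - S.lam (k + 1)), mul_pos hap hl]
        have q2 := mul_le_mul_of_nonneg_left q1 hl.le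
        nlinarith [q2]
      have hb2 : S.lam (k + 1) ^ 2 / 2 ≤
          (1 + S.θ k) * S.lam (k + 1) / (2 * S.lam (k + 1) - S.α k) * S.α k ^ 2 := by
        rw [div_mul_eq_mul_div, le_div_iff₀ (by linarith), div_mul_eq_mul_div, div_le_iff₀ (by norm_num)]
        have q1 : S.lam (k + 1) * (2 * S.lam (k + 1) - S.α k) ≤ S.α k ^ 2 := by
          nlinarith [mul_nonneg (by linarith : (0:ℝ) ≤ S.α k - S.lam (k + 1))
            (by linarith : (0:ℝ) ≤ 2 * S.lam (k + 1) + S.α k)]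
        have q2 := mul_le_mul_of_nonneg_left q1 hl.le
        nlinarith [q2, mul_nonneg hθ (mul_nonneg hl.le (sq_nonneg (S.α k)))]
      -- α(k+1)^2 = (min s1 s2)^2 * αk^2 ≥ λ²/2
      have harg1 : 0 ≤ S.lam (k + 1) / (2 * (S.α k - S.lam (k + 1))) := by
        apply div_nonneg hl.le; linarith
      have harg2 : 0 ≤ (1 + S.θ k) * S.lam (k + 1) / (2 * S.lam (k + 1) - S.α k) := by
        apply div_nonneg (by nlinarith); linarith
      rw [he, mul_pow]
      rcases min_cases (Real.sqrt (S.lam (k + 1) / (2 * (S.α k - S.lam (k + 1)))))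
          (Real.sqrt ((1 + S.θ k) * S.lam (k + 1) / (2 * S.lam (k + 1) - S.α k))) with
        ⟨hm, _⟩ | ⟨hm, _⟩
      · rw [hm, Real.sq_sqrt harg1]; exact hb1
      · rw [hm, Real.sq_sqrt harg2]; exact hb2
    · rw [he]
      calc S.lam (k + 1) / Real.sqrt 2 ≤ S.lam (k + 1) / 1 := by
            apply div_le_div_of_nonneg_left hl.le one_pos
            rw [show (1:ℝ) = Real.sqrt 1 from Real.sqrt_one.symm]
            exact Real.sqrt_le_sqrt (by norm_num)
        _ = S.lam (k + 1) := div_one _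
  · rcases (S.hcase3 k h3).1 with he | he
    · apply hsq
      rw [he, sq_sqrt_mul (by apply div_nonneg hap.le; linarith)]
      have : (1:ℝ) / 2 ≤ S.α k / (2 * (S.α k - S.lam (k + 1))) := by
        rw [div_le_div_iff₀ (by norm_num) (by linarith)]
        linarith
      nlinarith [sq_nonneg (S.lam (k + 1))]
    · rw [he]

end AdaBB
namespace AdaBB

variable {n : ℕ} (S : AdaBB n)

lemma descent (xs : EuclideanSpace ℝ (Fin n)) (k : ℕ) :
    ‖S.x (k + 1) - xs‖ ^ 2 ≤ ‖S.x k - xs‖ ^ 2 - 2 * S.α k * (S.f (S.x k) - S.f xs) +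
      S.α k ^ 2 * ‖S.f' (S.x k)‖ ^ 2 := by
  have hap : 0 < S.α k := S.alpha_pos k
  have hstep2 : S.x (k + 1) - xs = (S.x k - xs) - S.α k • S.f' (S.x k) := by
    rw [S.step_eq k]; abel
  have e : ‖S.x (k + 1) - xs‖ ^ 2 = ‖S.x k - xs‖ ^ 2 -
      2 * (S.α k * ⟪S.f' (S.x k), S.x k - xs⟫) + S.α k ^ 2 * ‖S.f' (S.x k)‖ ^ 2 := by
    rw [hstep2, norm_sub_sq_real, real_inner_smul_right, norm_smul, Real.norm_eq_abs,
      mul_pow, sq_abs, real_inner_comm]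
  have hg : S.f (S.x k) - S.f xs ≤ ⟪S.f' (S.x k), S.x k - xs⟫ := by
    have h := grad_ineq S.hconv (S.hgrad (S.x k)) xs
    have h2 : ⟪S.f' (S.x k), xs - S.x k⟫ = -⟪S.f' (S.x k), S.x k - xs⟫ := by
      rw [← inner_neg_right]; congr 1; abel
    rw [h2] at h; linarith
  nlinarith [mul_le_mul_of_nonneg_left hg (by linarith : (0:ℝ) ≤ 2 * S.α k), e]

lemma ups_decrease (xs : EuclideanSpace ℝ (Fin n)) (hxs : ∀ y, S.f xs ≤ S.f y) (k : ℕ) :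
    S.Upsilon xs (k + 2) ≤ S.Upsilon xs (k + 1) := by
  have hGB := S.GB k
  have hM2 := S.M_le_half (k + 1)
  have hB : ‖S.x (k + 2) - S.x (k + 1)‖ ^ 2 = S.α (k + 1) ^ 2 * ‖S.f' (S.x (k + 1))‖ ^ 2 := by
    have hΔx : S.x (k + 2) - S.x (k + 1) = -(S.α (k + 1) • S.f' (S.x (k + 1))) := by
      rw [S.step_eq (k + 1)]; abel
    rw [hΔx, norm_neg, norm_smul, mul_pow, Real.norm_eq_abs, sq_abs]
  have hA := S.descent xs (k + 1)
  have hPe : S.P (k + 1) = S.Paux (k + 1) := by rw [P, if_neg (by omega)]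
  have hPle : S.Paux (k + 1) ≤ S.α k + S.P k := by rw [← hPe]; exact S.P_succ_le k
  have hf1 : S.f xs ≤ S.f (S.x k) := hxs _
  have hXpos : 0 ≤ S.α (k + 1) ^ 2 * ‖S.f' (S.x (k + 1))‖ ^ 2 := by positivity
  have p : 0 ≤ (1 - 2 * S.M (k + 2)) * (S.α (k + 1) ^ 2 * ‖S.f' (S.x (k + 1))‖ ^ 2) :=
    mul_nonneg (by linarith) hXpos
  have q : S.Paux (k + 1) * (S.f (S.x k) - S.f xs) ≤
      (S.α k + S.P k) * (S.f (S.x k) - S.f xs) :=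
    mul_le_mul_of_nonneg_right hPle (by linarith)
  show ‖S.x (k + 2) - xs‖ ^ 2 + 2 * S.M (k + 2) * ‖S.x (k + 2) - S.x (k + 2 - 1)‖ ^ 2 +
      (2 * S.α (k + 2 - 1) + 2 * S.P (k + 2 - 1)) * (S.f (S.x (k + 2 - 1)) - S.f xs) ≤
    ‖S.x (k + 1) - xs‖ ^ 2 + 2 * S.M (k + 1) * ‖S.x (k + 1) - S.x (k + 1 - 1)‖ ^ 2 +
      (2 * S.α (k + 1 - 1) + 2 * S.P (k + 1 - 1)) * (S.f (S.x (k + 1 - 1)) - S.f xs)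
  have h21 : k + 2 - 1 = k + 1 := by omega
  simp only [h21, Nat.add_sub_cancel]
  rw [hB, hPe]
  nlinarith [hA, hGB, p, q]

end AdaBB
end

open scoped RealInnerProductSpace in
/-- Lemma 4.1: with the initial ratio `θ_0` chosen adaptively as in (4.2), the AdaBB
stepsizes satisfy `α_i ≥ 1/(√2·L)` for all `i ≥ 1`, hence `Σ_{i=1}^k α_i ≥ k/(√2·L)`. -/
theorem adabb_lower_bound_alphai (n : ℕ) (S : AdaBB n)
    (xs : EuclideanSpace ℝ (Fin n)) (hxs : ∀ y, S.f xs ≤ S.f y)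
    (R : ℝ) (hR0 : 0 ≤ R)
    (hR2 : R ^ 2 = ‖S.x 0 - xs‖ ^ 2 + S.α 0 ^ 2 * (1 + 2 * S.M 1) * ‖S.f' (S.x 0)‖ ^ 2 +
      max (2 * S.P 1 - 2 * S.α 0) 0 * (S.f (S.x 0) - S.f xs))
    (L : ℝ) (hL : 0 < L)
    (hcoco : ∀ x y : EuclideanSpace ℝ (Fin n), ‖x - xs‖ ≤ R → ‖y - xs‖ ≤ R →
      (1 / L) * ‖S.f' x - S.f' y‖ ^ 2 ≤ ⟪S.f' x - S.f' y, x - y⟫)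
    (hθ0 : S.θ 0 = if Real.sqrt 2 * S.α 0 ≤ S.lam 1
      then S.lam 1 ^ 2 / (2 * S.α 0 ^ 2) - 1 else 0) :
    (∀ i : ℕ, 1 ≤ i → 1 / (Real.sqrt 2 * L) ≤ S.α i) ∧
    (∀ k : ℕ, 1 ≤ k → (k : ℝ) / (Real.sqrt 2 * L) ≤ ∑ i ∈ Finset.Icc 1 k, S.α i) := by
  have hs2 : (0:ℝ) < Real.sqrt 2 := Real.sqrt_pos.mpr (by norm_num)
  have hM1 : 0 ≤ S.M 1 := S.M_nonneg 0
  have hfx0 : 0 ≤ S.f (S.x 0) - S.f xs := by linarith [hxs (S.x 0)]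
  have hmax : 0 ≤ max (2 * S.P 1 - 2 * S.α 0) 0 * (S.f (S.x 0) - S.f xs) :=
    mul_nonneg (le_max_right _ _) hfx0
  have hP1e : S.P 1 = S.Paux 1 := by rw [AdaBB.P]; norm_num
  have hP0e : S.P 0 = S.Paux 1 - S.α 0 := by rw [AdaBB.P]; norm_num
  have hups1 : S.Upsilon xs 1 ≤ R ^ 2 := by
    have hA := S.descent xs 0
    have hB : ‖S.x 1 - S.x 0‖ ^ 2 = S.α 0 ^ 2 * ‖S.f' (S.x 0)‖ ^ 2 := by
      have hΔx : S.x 1 - S.x 0 = -(S.α 0 • S.f' (S.x 0)) := by rw [S.hx1]; abel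
      rw [hΔx, norm_neg, norm_smul, mul_pow, Real.norm_eq_abs, sq_abs]
    have hm : (2 * S.P 1 - 2 * S.α 0) * (S.f (S.x 0) - S.f xs) ≤
        max (2 * S.P 1 - 2 * S.α 0) 0 * (S.f (S.x 0) - S.f xs) :=
      mul_le_mul_of_nonneg_right (le_max_left _ _) hfx0
    have hU1 : S.Upsilon xs 1 = ‖S.x 1 - xs‖ ^ 2 + 2 * S.M 1 * ‖S.x 1 - S.x 0‖ ^ 2 +
        (2 * S.α 0 + 2 * S.P 0) * (S.f (S.x 0) - S.f xs) := rfl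
    rw [hP1e] at hm hR2
    norm_num at hA
    rw [hU1, hB, hP0e]
    nlinarith [hA, hm, hR2]
  have hub : ∀ k, S.Upsilon xs (k + 1) ≤ R ^ 2 := by
    intro k
    induction k with
    | zero => exact hups1
    | succ k ih => exact le_trans (S.ups_decrease xs hxs k) ih
  have hball : ∀ k, ‖S.x k - xs‖ ≤ R := by
    intro k
    have hsq : ‖S.x k - xs‖ ^ 2 ≤ R ^ 2 := by
      cases k with
      | zero =>
        have h0 : 0 ≤ S.α 0 ^ 2 * (1 + 2 * S.M 1) * ‖S.f' (S.x 0)‖ ^ 2 :=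
          mul_nonneg (mul_nonneg (sq_nonneg _) (by linarith)) (sq_nonneg _)
        linarith [hR2]
      | succ j =>
        have hU := hub j
        have hU1 : S.Upsilon xs (j + 1) = ‖S.x (j + 1) - xs‖ ^ 2 +
            2 * S.M (j + 1) * ‖S.x (j + 1) - S.x j‖ ^ 2 +
            (2 * S.α j + 2 * S.P j) * (S.f (S.x j) - S.f xs) := rfl
        rw [hU1] at hU
        have h1 : 0 ≤ 2 * S.M (j + 1) * ‖S.x (j + 1) - S.x j‖ ^ 2 :=
          mul_nonneg (by linarith [S.M_nonneg j]) (sq_nonneg _)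
        have h2 : 0 ≤ (2 * S.α j + 2 * S.P j) * (S.f (S.x j) - S.f xs) :=
          mul_nonneg (by linarith [S.aP_nonneg j]) (by linarith [hxs (S.x j)])
        linarith
    exact le_of_pow_le_pow_left₀ two_ne_zero hR0 hsq
  have hlamL : ∀ k, 1 / L ≤ S.lam (k + 1) := by
    intro k
    have h := hcoco (S.x (k + 1)) (S.x k) (hball (k + 1)) (hball k)
    have hne : S.f' (S.x (k + 1)) - S.f' (S.x k) ≠ 0 := sub_ne_zero.mpr (S.hne k)
    have hD : 0 < ‖S.f' (S.x (k + 1)) - S.f' (S.x k)‖ ^ 2 := pow_pos (norm_pos_iff.mpr hne) 2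
    have hlamD : ⟪S.f' (S.x (k + 1)) - S.f' (S.x k), S.x (k + 1) - S.x k⟫ =
        S.lam (k + 1) * ‖S.f' (S.x (k + 1)) - S.f' (S.x k)‖ ^ 2 := by
      rw [S.hlam k, div_mul_cancel₀ _ hD.ne']
    rw [hlamD] at h
    exact le_of_mul_le_mul_right h hD
  have hrw : 1 / (Real.sqrt 2 * L) = (1 / L) / Real.sqrt 2 := by
    rw [div_div, mul_comm]
  have hchain : ∀ m, 1 / (Real.sqrt 2 * L) ≤ S.lam (m + 1) / Real.sqrt 2 := by
    intro m
    rw [hrw]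
    exact (div_le_div_iff_of_pos_right hs2).mpr (hlamL m)
  have halpha : ∀ i, 1 / (Real.sqrt 2 * L) ≤ S.α (i + 1) := by
    intro i
    induction i with
    | zero =>
      rcases S.tri 0 with h1 | ⟨h2, h2'⟩ | h3
      · obtain ⟨he, -⟩ := S.hcase1 0 h1
        by_cases hif : Real.sqrt 2 * S.α 0 ≤ S.lam 1
        · rw [if_pos hif] at hθ0
          have h1θ : 1 + S.θ 0 = S.lam 1 ^ 2 / (2 * S.α 0 ^ 2) := by rw [hθ0]; ring
          have hθn : (0:ℝ) ≤ 1 + S.θ 0 := by linarith [S.theta_nonneg 0]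
          have ha0 : S.α 0 ≠ 0 := S.hα0.ne'
          have hsqa : S.α 1 ^ 2 = S.lam 1 ^ 2 / 2 := by
            rw [he, AdaBB.sq_sqrt_mul hθn, h1θ]
            field_simp
          have hkey : S.lam 1 / Real.sqrt 2 ≤ S.α 1 := by
            refine le_of_pow_le_pow_left₀ two_ne_zero (S.alpha_pos 1).le ?_
            calc (S.lam 1 / Real.sqrt 2) ^ 2 = S.lam 1 ^ 2 / 2 := by
                  rw [div_pow, Real.sq_sqrt (by norm_num : (0:ℝ) ≤ 2)]
              _ ≤ S.α 1 ^ 2 := by rw [hsqa]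
          exact le_trans (hchain 0) hkey
        · rw [if_neg hif] at hθ0
          push_neg at hif
          have hsqa : S.α 1 = S.α 0 := by
            rw [he, hθ0]
            norm_num
          have h5 : S.lam 1 / Real.sqrt 2 ≤ S.α 0 := by
            rw [div_le_iff₀ hs2]
            nlinarith [hif]
          rw [hsqa]
          exact le_trans (hchain 0) h5
      · exact le_trans (hchain 0) (S.alpha_ge_half 0 h2')
      · exact le_trans (hchain 0)
          (S.alpha_ge_half 0 (by linarith [S.hlampos 0, S.alpha_pos 0]))
    | succ i ih =>
      rcases S.tri (i + 1) with h1 | ⟨h2, h2'⟩ | h3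
      · obtain ⟨he, -⟩ := S.hcase1 (i + 1) h1
        have hθ := S.theta_nonneg (i + 1)
        have hge : S.α (i + 1) ≤ S.α (i + 2) := by
          rw [he]
          have h1s : 1 ≤ Real.sqrt (1 + S.θ (i + 1)) := by
            rw [show (1:ℝ) = Real.sqrt 1 from Real.sqrt_one.symm]
            exact Real.sqrt_le_sqrt (by linarith [Real.sqrt_one])
          nlinarith [S.alpha_pos (i + 1), h1s]
        linarith
      · exact le_trans (hchain (i + 1)) (S.alpha_ge_half (i + 1) h2')
      · exact le_trans (hchain (i + 1))
          (S.alpha_ge_half (i + 1) (by linarith [S.hlampos (i + 1), S.alpha_pos (i + 1)]))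
  constructor
  · intro i hi
    cases i with
    | zero => omega
    | succ j => exact halpha j
  · intro k hk
    have h1 : ∀ i ∈ Finset.Icc 1 k, 1 / (Real.sqrt 2 * L) ≤ S.α i := by
      intro i hi
      have h2 := (Finset.mem_Icc.mp hi).1
      cases i with
      | zero => omega
      | succ j => exact halpha j
    have h2 := Finset.sum_le_sum h1
    rw [Finset.sum_const, Nat.card_Icc] at h2
    have h4 : k + 1 - 1 = k := by omega
    rw [h4, nsmul_eq_mul] at h2
    calc (k : ℝ) / (Real.sqrt 2 * L) = (k : ℝ) * (1 / (Real.sqrt 2 * L)) := by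
          rw [mul_one_div]
      _ ≤ _ := h2
end

section
/- With the initial ratio θ_0 chosen adaptively, the AdaBB stepsizes satisfy: (a) if i ∈ I_2 then α_i ≥ 1/L; (b) if i+1 ∈ I_3 then α_i ≥ 2/L and α_i + α_{i+1} ≥ (4+√2)/(2L); (c) if i ∈ I_1 ∪ I_2 and i+1 ∈ I_1 then α_{i+1} ≥ 1/L; (d) if i ∈ I_3 then α_{i−1} + α_i + α_{i+1} ≥ (2+√2)/L. -/
open scoped RealInnerProductSpace
open Finset Filter

section Aux
open Real
variable {n : ℕ} (S : AdaBB n)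

lemma adabb_pos_nonneg : ∀ k, 0 < S.α k ∧ 0 ≤ S.θ k := by
  intro k
  induction k with
  | zero => exact ⟨S.hα0, S.hθ0⟩
  | succ k ih =>
    obtain ⟨hαk, hθk⟩ := ih
    have hlm := S.hlampos k
    rcases le_or_gt (S.lam (k+1)) (S.α k / 2) with h3 | h23
    · obtain ⟨ha, hθ⟩ := S.hcase3 k h3
      have halm : S.lam (k+1) < S.α k := by linarith
      have hpos : 0 < S.α (k+1) := by
        rcases ha with h | h <;> rw [h]
        · exact mul_pos (Real.sqrt_pos.mpr (div_pos hαk (by linarith))) hlm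
        · positivity
      exact ⟨hpos, hθ ▸ le_of_lt (div_pos hpos hαk)⟩
    rcases lt_or_ge (S.lam (k+1)) (S.α k) with h2 | h1
    · obtain ⟨ha, hθ⟩ := S.hcase2 k h23 h2
      have hpos : 0 < S.α (k+1) := by
        rcases ha with h | h <;> rw [h]
        · refine mul_pos (lt_min ?_ ?_) hαk
          · exact Real.sqrt_pos.mpr (div_pos hlm (by linarith))
          · apply Real.sqrt_pos.mpr
            apply div_pos (by positivity) (by linarith)
        · exact hlm
      refine ⟨hpos, ?_⟩
      rw [hθ, sub_nonneg, div_le_div_iff₀ hlm hαk]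
      nlinarith
    · obtain ⟨ha, hθ⟩ := S.hcase1 k h1
      have hpos : 0 < S.α (k+1) := by
        rw [ha]; exact mul_pos (Real.sqrt_pos.mpr (by linarith)) hαk
      exact ⟨hpos, hθ ▸ le_of_lt (div_pos hpos hαk)⟩

lemma adabb_alpha_pos (k : ℕ) : 0 < S.α k := (adabb_pos_nonneg S k).1
lemma adabb_theta_nonneg (k : ℕ) : 0 ≤ S.θ k := (adabb_pos_nonneg S k).2

/-- In case 2, `α (k+1) ≥ lam (k+1)`. -/
lemma adabb_case2_ge (k : ℕ) (h23 : S.α k / 2 < S.lam (k+1)) (h2 : S.lam (k+1) < S.α k) :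
    S.lam (k+1) ≤ S.α (k+1) := by
  have hlm := S.hlampos k
  have hαk := adabb_alpha_pos S k
  have hθk := adabb_theta_nonneg S k
  obtain ⟨ha, -⟩ := S.hcase2 k h23 h2
  rcases ha with h | h
  · rw [h]
    have h1 : S.lam (k+1) / S.α k ≤ Real.sqrt (S.lam (k+1) / (2 * (S.α k - S.lam (k+1)))) := by
      rw [Real.le_sqrt' (by positivity)]
      rw [div_pow, div_le_div_iff₀ (by positivity) (by linarith)]
      nlinarith [sq_nonneg (S.α k - S.lam (k+1))]
    have h2' : S.lam (k+1) / S.α k ≤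
        Real.sqrt ((1 + S.θ k) * S.lam (k+1) / (2 * S.lam (k+1) - S.α k)) := by
      rw [Real.le_sqrt' (by positivity)]
      rw [div_pow, div_le_div_iff₀ (by positivity) (by linarith)]
      nlinarith [mul_nonneg (mul_nonneg hθk hlm.le) (sq_nonneg (S.α k)),
        mul_pos hlm (mul_pos (sub_pos.mpr h2) (by linarith : (0:ℝ) < S.α k + 2 * S.lam (k+1)))]
    calc S.lam (k+1) = S.lam (k+1) / S.α k * S.α k := by field_simp
    _ ≤ _ := by
        apply mul_le_mul_of_nonneg_right _ hαk.le
        exact le_min h1 h2'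
  · rw [h]

/-- In case 3, `α (k+1) ≥ lam (k+1)/√2`. -/
lemma adabb_case3_ge (k : ℕ) (h3 : S.lam (k+1) ≤ S.α k / 2) :
    S.lam (k+1) / Real.sqrt 2 ≤ S.α (k+1) := by
  have hlm := S.hlampos k
  have hαk := adabb_alpha_pos S k
  obtain ⟨ha, -⟩ := S.hcase3 k h3
  rcases ha with h | h
  · rw [h]
    have hs : Real.sqrt 2⁻¹ ≤ Real.sqrt (S.α k / (2 * (S.α k - S.lam (k+1)))) := by
      apply Real.sqrt_le_sqrt
      rw [le_div_iff₀ (by linarith)]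
      linarith
    calc S.lam (k+1) / Real.sqrt 2 = Real.sqrt 2⁻¹ * S.lam (k+1) := by
          rw [Real.sqrt_inv]; ring
    _ ≤ _ := mul_le_mul_of_nonneg_right hs hlm.le
  · rw [h]
/-- Bounds on `M (k+1)`: `0 ≤ M (k+1) ≤ 1/2`. -/
lemma adabb_M_bounds (k : ℕ) : 0 ≤ S.M (k+1) ∧ S.M (k+1) ≤ 1/2 := by
  have hlm := S.hlampos k
  have hαk := adabb_alpha_pos S k
  have hθk := adabb_theta_nonneg S k
  have ha1 := adabb_alpha_pos S (k+1)
  rw [AdaBB.M, Nat.add_sub_cancel]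
  split_ifs with h1 h2
  · norm_num
  · -- case 2 : α k / 2 < lam (k+1) < α k
    push_neg at h1
    have e : S.α (k+1)^2/(S.lam (k+1) * S.α k) - S.α (k+1)^2/(S.α k)^2
        = S.α (k+1)^2 * (S.α k - S.lam (k+1)) / (S.lam (k+1) * S.α k^2) := by
      field_simp
    constructor
    · rw [e]
      exact div_nonneg (mul_nonneg (sq_nonneg _) (by linarith)) (by positivity)
    · rw [e, div_le_iff₀ (by positivity)]
      obtain ⟨ha, -⟩ := S.hcase2 k h2 h1
      rcases ha with h | h
      · have hle : S.α (k+1) ≤ Real.sqrt (S.lam (k+1) / (2 * (S.α k - S.lam (k+1)))) * S.α k := by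
          rw [h]; exact mul_le_mul_of_nonneg_right (min_le_left _ _) hαk.le
        have hsq : S.α (k+1)^2 ≤ S.lam (k+1) / (2 * (S.α k - S.lam (k+1))) * S.α k^2 := by
          calc S.α (k+1)^2 ≤ (Real.sqrt (S.lam (k+1) / (2 * (S.α k - S.lam (k+1)))) * S.α k)^2 :=
                pow_le_pow_left₀ ha1.le hle 2
          _ = _ := by
              rw [mul_pow, Real.sq_sqrt (div_nonneg hlm.le (by linarith))]
        rw [div_mul_eq_mul_div, le_div_iff₀ (by linarith)] at hsq
        nlinarith
      · rw [h]; nlinarith [sq_nonneg (S.α k - 2 * S.lam (k+1)), sq_nonneg (S.α k - S.lam (k+1))]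
  · -- case 3 : lam (k+1) ≤ α k / 2
    push_neg at h1 h2
    have e : S.α (k+1)^2/(S.lam (k+1))^2 - S.α (k+1)^2/(S.α k * S.lam (k+1))
        = S.α (k+1)^2 * (S.α k - S.lam (k+1)) / (S.lam (k+1)^2 * S.α k) := by
      field_simp
    constructor
    · rw [e]
      exact div_nonneg (mul_nonneg (sq_nonneg _) (by linarith)) (by positivity)
    · rw [e, div_le_iff₀ (by positivity)]
      obtain ⟨ha, -⟩ := S.hcase3 k h2
      rcases ha with h | h
      · have hsq : S.α (k+1)^2 = S.α k / (2 * (S.α k - S.lam (k+1))) * S.lam (k+1)^2 := by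
          rw [h, mul_pow, Real.sq_sqrt (div_nonneg hαk.le (by linarith))]
        rw [div_mul_eq_mul_div, eq_div_iff (by linarith)] at hsq
        nlinarith
      · have hsq : S.α (k+1)^2 = S.lam (k+1)^2 / 2 := by
          rw [h, div_pow, Real.sq_sqrt (by norm_num)]
        nlinarith
  done

lemma adabb_Paux_eq (k : ℕ) : S.Paux (k+1) = S.θ (k+1) * S.α (k+1) := by
  have hlm := S.hlampos k
  have hαk := adabb_alpha_pos S k
  rw [AdaBB.Paux, Nat.add_sub_cancel]
  split_ifs with h1 h2
  · obtain ⟨-, hθ⟩ := S.hcase1 k h1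
    rw [hθ]; field_simp
  · push_neg at h1
    obtain ⟨-, hθ⟩ := S.hcase2 k h2 h1
    rw [hθ]; field_simp
  · push_neg at h1 h2
    obtain ⟨-, hθ⟩ := S.hcase3 k h2
    rw [hθ]; field_simp

lemma adabb_Paux_pos (k : ℕ) : 0 < S.Paux (k+1) := by
  have hlm := S.hlampos k
  have hαk := adabb_alpha_pos S k
  have ha1 := adabb_alpha_pos S (k+1)
  rw [AdaBB.Paux, Nat.add_sub_cancel]
  split_ifs with h1 h2
  · positivity
  · push_neg at h1
    have : S.α (k+1)^2 / S.lam (k+1) < 2 * S.α (k+1)^2 / S.α k := by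
      rw [div_lt_div_iff₀ hlm hαk]
      nlinarith [mul_pos (pow_pos ha1 2) (show (0:ℝ) < 2 * S.lam (k+1) - S.α k by linarith)]
    linarith
  · positivity

lemma adabb_P_succ_le (k : ℕ) : S.P (k+1) ≤ S.α k + S.P k := by
  cases k with
  | zero =>
    rw [AdaBB.P, AdaBB.P]
    norm_num
  | succ j =>
    rw [AdaBB.P, AdaBB.P]
    norm_num
    have hlm := S.hlampos (j+1)
    have hβ := adabb_alpha_pos S (j+1)
    have hτ := adabb_theta_nonneg S (j+1)
    have ha2 := adabb_alpha_pos S (j+2)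
    have hP := adabb_Paux_eq S j
    rw [hP]
    rw [show j+1+1 = j+2 from rfl, AdaBB.Paux, show j+2-1 = j+1 from rfl]
    split_ifs with h1 h2
    · obtain ⟨ha, -⟩ := S.hcase1 (j+1) h1
      have hsq : S.α (j+2)^2 = (1 + S.θ (j+1)) * S.α (j+1)^2 := by
        rw [ha, mul_pow, Real.sq_sqrt (by linarith)]
      rw [div_le_iff₀ hβ, hsq]; nlinarith
    · push_neg at h1
      obtain ⟨ha, -⟩ := S.hcase2 (j+1) h2 h1
      have key : S.α (j+2)^2 * (2 * S.lam (j+2) - S.α (j+1))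
          ≤ (1 + S.θ (j+1)) * S.α (j+1)^2 * S.lam (j+2) := by
        rcases ha with h | h
        · have hle : S.α (j+2) ≤
              Real.sqrt ((1 + S.θ (j+1)) * S.lam (j+2) / (2 * S.lam (j+2) - S.α (j+1)))
              * S.α (j+1) := by
            rw [h]; exact mul_le_mul_of_nonneg_right (min_le_right _ _) hβ.le
          have hsq : S.α (j+2)^2 ≤
              (1 + S.θ (j+1)) * S.lam (j+2) / (2 * S.lam (j+2) - S.α (j+1)) * S.α (j+1)^2 := by
            calc S.α (j+2)^2 ≤ _ := pow_le_pow_left₀ ha2.le hle 2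
            _ = _ := by
                rw [mul_pow, Real.sq_sqrt (div_nonneg (mul_nonneg (by linarith) hlm.le) (by linarith))]
          rw [div_mul_eq_mul_div, le_div_iff₀ (by linarith)] at hsq
          nlinarith
        · rw [h]
          nlinarith [mul_nonneg hτ (mul_nonneg (sq_nonneg (S.α (j+1))) hlm.le),
            mul_pos hlm (mul_pos (sub_pos.mpr h1)
              (show (0:ℝ) < S.α (j+1) + 2 * S.lam (j+2) by linarith))]
      have e : 2 * S.α (j+2)^2 / S.α (j+1) - S.α (j+2)^2 / S.lam (j+2)
          = S.α (j+2)^2 * (2 * S.lam (j+2) - S.α (j+1)) / (S.α (j+1) * S.lam (j+2)) := by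
        field_simp
      rw [e, div_le_iff₀ (mul_pos hβ hlm)]
      nlinarith
    · push_neg at h1 h2
      obtain ⟨ha, -⟩ := S.hcase3 (j+1) h2
      rw [div_le_iff₀ hβ]
      rcases ha with h | h
      · have hsq : S.α (j+2)^2 = S.α (j+1) / (2 * (S.α (j+1) - S.lam (j+2))) * S.lam (j+2)^2 := by
          rw [h, mul_pow, Real.sq_sqrt (div_nonneg hβ.le (by linarith))]
        rw [div_mul_eq_mul_div, eq_div_iff (by linarith)] at hsq
        nlinarith [mul_nonneg (sq_nonneg (S.α (j+2)))
            (show (0:ℝ) ≤ S.α (j+1) - 2 * S.lam (j+2) by linarith),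
          mul_nonneg hτ (sq_nonneg (S.α (j+1))), sq_nonneg (S.α (j+1) - 2 * S.lam (j+2))]
      · have hsq : S.α (j+2)^2 = S.lam (j+2)^2 / 2 := by
          rw [h, div_pow, Real.sq_sqrt (by norm_num)]
        nlinarith [mul_nonneg hτ (sq_nonneg (S.α (j+1))), sq_nonneg (S.α (j+1) - 2 * S.lam (j+2))]

lemma adabb_P_pos (k : ℕ) : 0 < S.P (k+1) := by
  rw [AdaBB.P]; norm_num; exact adabb_Paux_pos S k
open scoped RealInnerProductSpace in
/-- Gradient inequality for convex functions. -/
lemma adabb_support (x y : EuclideanSpace ℝ (Fin n)) :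
    S.f x + ⟪S.f' x, y - x⟫ ≤ S.f y := by
  classical
  set φ : ℝ →ᵃ[ℝ] EuclideanSpace ℝ (Fin n) := AffineMap.lineMap x y with hφ
  have hφ0 : φ 0 = x := by simp [hφ]
  have hφ1 : φ 1 = y := by simp [hφ]
  have hg : ConvexOn ℝ Set.univ (S.f ∘ φ) := by
    have := S.hconv.comp_affineMap φ
    simpa using this
  have hder : HasDerivAt (S.f ∘ φ) ⟪S.f' x, y - x⟫ 0 := by
    have h1 : HasFDerivAt S.f (InnerProductSpace.toDual ℝ _ (S.f' x)) x :=
      hasGradientAt_iff_hasFDerivAt.mp (S.hgrad x)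
    have h2 : HasDerivAt (fun t : ℝ => φ t) (y - x) 0 := by
      have h4 : HasDerivAt (fun t : ℝ => t • (y - x) + x) ((1:ℝ) • (y - x)) 0 :=
        ((hasDerivAt_id (0:ℝ)).smul_const (y - x)).add_const x
      simp only [one_smul] at h4
      have hfun : (fun t : ℝ => φ t) = fun t : ℝ => t • (y - x) + x := by
        funext t
        simp [hφ, AffineMap.lineMap_apply_module]
        module
      rw [hfun]
      exact h4
    have h1' : HasFDerivAt S.f (InnerProductSpace.toDual ℝ _ (S.f' x)) (φ 0) := by
      rw [hφ0]; exact h1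
    have h3 := HasFDerivAt.comp_hasDerivAt (0:ℝ) h1' h2
    rw [InnerProductSpace.toDual_apply_apply] at h3
    exact h3
  have hslope := hg.le_slope_of_hasDerivWithinAt_Ioi (Set.mem_univ 0) (Set.mem_univ 1)
    zero_lt_one hder.hasDerivWithinAt
  rw [slope_def_field] at hslope
  simp only [Function.comp_apply, hφ0, hφ1] at hslope
  have : ⟪S.f' x, y - x⟫ ≤ S.f y - S.f x := by
    calc ⟪S.f' x, y - x⟫ ≤ (S.f y - S.f x) / (1 - 0) := hslope
    _ = S.f y - S.f x := by norm_num
  linarith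

lemma adabb_step (k : ℕ) : S.x (k+1) = S.x k - S.α k • S.f' (S.x k) := by
  cases k with
  | zero => exact S.hx1
  | succ j => exact S.hstep j

open scoped RealInnerProductSpace in
lemma adabb_lam_id (k : ℕ) :
    S.lam (k+1) * ‖S.f' (S.x (k+1)) - S.f' (S.x k)‖^2
      = ⟪S.f' (S.x (k+1)) - S.f' (S.x k), S.x (k+1) - S.x k⟫ := by
  have hne : ‖S.f' (S.x (k+1)) - S.f' (S.x k)‖^2 ≠ 0 := by
    apply pow_ne_zero
    rw [norm_ne_zero_iff, sub_ne_zero]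
    exact S.hne k
  rw [S.hlam k, div_mul_cancel₀ _ hne]
/-- Core algebraic inequality, case `β ≤ λ` (I₁). -/
lemma adabb_core1 (β lm Q A b t : ℝ) (hβ : 0 < β) (hb : 0 ≤ b) (ht : 0 ≤ t)
    (h1 : β ≤ lm) (hQ1 : 0 ≤ Q) (hQ2 : Q ≤ 2*A)
    (hcs : lm^2*t ≤ β^2*b) :
    β*(Q*(β*b + β*t - 2*lm*t)) ≤ β*(2*A*(β*b - lm*t)) := by
  nlinarith [mul_nonneg (sub_nonneg.mpr hQ2) (sub_nonneg.mpr hcs),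
    mul_nonneg (mul_nonneg ht (sub_nonneg.mpr h1))
      (add_nonneg (mul_nonneg (sub_nonneg.mpr hQ2) (le_trans hβ.le h1))
        (mul_nonneg hQ1 hβ.le))]

/-- Core algebraic inequality, case `β/2 < λ < β` (I₂). -/
lemma adabb_core2 (β lm Q A b t : ℝ) (hβ : 0 < β) (hlm : 0 < lm) (hb : 0 ≤ b) (ht : 0 ≤ t)
    (h2a : β/2 < lm) (h2b : lm < β) (hQ1 : 0 ≤ Q) (hQ2 : Q ≤ 2*A)
    (hcs : lm^2*t ≤ β^2*b) :
    β*(lm*(Q*(β*b + β*t - 2*lm*t))) ≤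
      β*(2*A*(β - lm)*(β*b) + 2*A*(2*lm - β)*(β*b - lm*t)) := by
  nlinarith [mul_nonneg (mul_nonneg hlm.le (sub_nonneg.mpr hQ2)) (sub_nonneg.mpr hcs),
    mul_nonneg (mul_nonneg (mul_nonneg hlm.le (sub_nonneg.mpr hQ2)) (sq_nonneg (lm - β))) ht]

/-- Core algebraic inequality, case `λ ≤ β/2` (I₃). -/
lemma adabb_core3 (β lm Q A b t : ℝ) (hβ : 0 < β) (hlm : 0 < lm) (hb : 0 ≤ b) (ht : 0 ≤ t)
    (h3 : lm ≤ β/2) (hQ1 : 0 ≤ Q) (hQ2 : Q ≤ 2*A) (hA : 0 ≤ A)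
    (hcs : lm^2*t ≤ β^2*b) :
    lm^2*(Q*(β*b + β*t - 2*lm*t)) ≤
      2*A*(β - lm)*β^2*b + 2*A*lm^2*(β*b - lm*t) := by
  have hC : 0 ≤ 2*A*lm + Q*(β - 2*lm) :=
    add_nonneg (mul_nonneg (by linarith) hlm.le) (mul_nonneg hQ1 (by linarith))
  nlinarith [mul_nonneg (mul_nonneg (mul_nonneg hβ.le (sq_nonneg (β - lm))) (sub_nonneg.mpr hQ2)) hb,
    mul_nonneg hC (sub_nonneg.mpr hcs)]
set_option maxHeartbeats 2000000 in
open scoped RealInnerProductSpace in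
/-- Lyapunov decrease: `Υ_{k+1} ≤ Υ_k` for `k ≥ 1`. -/
lemma adabb_upsilon_decrease (xs : EuclideanSpace ℝ (Fin n)) (hxs : ∀ y, S.f xs ≤ S.f y)
    (j : ℕ) : S.Upsilon xs (j+2) ≤ S.Upsilon xs (j+1) := by
  have hβ : 0 < S.α j := adabb_alpha_pos S j
  have hαk : 0 < S.α (j+1) := adabb_alpha_pos S (j+1)
  have hlm : 0 < S.lam (j+1) := S.hlampos j
  have hβ0 : S.α j ≠ 0 := ne_of_gt hβ
  have hlm0 : S.lam (j+1) ≠ 0 := ne_of_gt hlm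
  have hstep0 : S.x (j+1) - S.x j = -(S.α j • S.f' (S.x j)) := by
    rw [adabb_step S j]; abel
  have hstep1 : S.x (j+2) - S.x (j+1) = -(S.α (j+1) • S.f' (S.x (j+1))) := by
    rw [adabb_step S (j+1)]; abel
  have hlamid := adabb_lam_id S j
  have hbs : S.α j * ⟪S.f' (S.x (j+1)), S.f' (S.x j)⟫
      = S.α j * ‖S.f' (S.x j)‖^2 - S.lam (j+1) * ‖S.f' (S.x (j+1)) - S.f' (S.x j)‖^2 := by
    have hinner : (⟪S.f' (S.x (j+1)) - S.f' (S.x j), S.x (j+1) - S.x j⟫ : ℝ)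
        = S.α j * ‖S.f' (S.x j)‖^2 - S.α j * ⟪S.f' (S.x (j+1)), S.f' (S.x j)⟫ := by
      rw [hstep0, inner_neg_right, real_inner_smul_right, inner_sub_left,
        real_inner_self_eq_norm_sq]
      ring
    linarith [hlamid, hinner]
  have hba : S.α j * ‖S.f' (S.x (j+1))‖^2
      = S.α j * ‖S.f' (S.x j)‖^2 + S.α j * ‖S.f' (S.x (j+1)) - S.f' (S.x j)‖^2
        - 2 * S.lam (j+1) * ‖S.f' (S.x (j+1)) - S.f' (S.x j)‖^2 := by
    have ht_exp : ‖S.f' (S.x (j+1)) - S.f' (S.x j)‖^2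
        = ‖S.f' (S.x (j+1))‖^2 - 2*⟪S.f' (S.x (j+1)), S.f' (S.x j)⟫ + ‖S.f' (S.x j)‖^2 :=
      norm_sub_sq_real _ _
    have h2 : S.α j * ‖S.f' (S.x (j+1)) - S.f' (S.x j)‖^2
        = S.α j * (‖S.f' (S.x (j+1))‖^2 - 2*⟪S.f' (S.x (j+1)), S.f' (S.x j)⟫
          + ‖S.f' (S.x j)‖^2) := by rw [← ht_exp]
    nlinarith [hbs, h2]
  have hcs : S.lam (j+1)^2 * ‖S.f' (S.x (j+1)) - S.f' (S.x j)‖^2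
      ≤ S.α j^2 * ‖S.f' (S.x j)‖^2 := by
    have hCS := real_inner_mul_inner_self_le (S.f' (S.x (j+1)) - S.f' (S.x j))
      (S.x (j+1) - S.x j)
    rw [← hlamid, real_inner_self_eq_norm_sq, real_inner_self_eq_norm_sq] at hCS
    have hv : ‖S.x (j+1) - S.x j‖^2 = S.α j^2 * ‖S.f' (S.x j)‖^2 := by
      rw [hstep0, norm_neg, norm_smul, mul_pow, Real.norm_eq_abs, sq_abs]
    rw [hv] at hCS
    by_cases htz : ‖S.f' (S.x (j+1)) - S.f' (S.x j)‖^2 = 0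
    · rw [htz, mul_zero]; positivity
    · have htpos : 0 < ‖S.f' (S.x (j+1)) - S.f' (S.x j)‖^2 :=
        lt_of_le_of_ne (by positivity) (Ne.symm htz)
      have : S.lam (j+1)^2 * ‖S.f' (S.x (j+1)) - S.f' (S.x j)‖^2
          * ‖S.f' (S.x (j+1)) - S.f' (S.x j)‖^2
          ≤ S.α j^2 * ‖S.f' (S.x j)‖^2 * ‖S.f' (S.x (j+1)) - S.f' (S.x j)‖^2 := by
        nlinarith [hCS]
      exact le_of_mul_le_mul_right this htpos
  have hexp : ‖S.x (j+2) - xs‖^2 = ‖S.x (j+1) - xs‖^2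
      - 2*S.α (j+1)*⟪S.f' (S.x (j+1)), S.x (j+1) - xs⟫
      + S.α (j+1)^2*‖S.f' (S.x (j+1))‖^2 := by
    have hsub : S.x (j+2) - xs = (S.x (j+1) - xs) - S.α (j+1) • S.f' (S.x (j+1)) := by
      rw [adabb_step S (j+1)]; abel
    rw [hsub, norm_sub_sq_real, real_inner_smul_right,
      real_inner_comm (S.x (j+1) - xs) (S.f' (S.x (j+1))), norm_smul, mul_pow,
      Real.norm_eq_abs, sq_abs]
    ring
  have hsupp : S.f (S.x (j+1)) - S.f xs ≤ ⟪S.f' (S.x (j+1)), S.x (j+1) - xs⟫ := by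
    have h := adabb_support S (S.x (j+1)) xs
    rw [show xs - S.x (j+1) = -(S.x (j+1) - xs) by abel, inner_neg_right] at h
    linarith
  have hf1 : S.f (S.x (j+1)) - S.f xs ≤ S.f (S.x j) - S.f xs
      - S.α j * ⟪S.f' (S.x (j+1)), S.f' (S.x j)⟫ := by
    have h := adabb_support S (S.x (j+1)) (S.x j)
    rw [show S.x j - S.x (j+1) = S.α j • S.f' (S.x j) by rw [adabb_step S j]; abel,
      real_inner_smul_right] at h
    linarith
  have hΔ0 : 0 ≤ S.f (S.x j) - S.f xs := sub_nonneg.mpr (hxs _)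
  have hM2 := adabb_M_bounds S (j+1)
  have hQ1 : 0 ≤ (1+2*S.M (j+2))*S.α (j+1)^2 := by nlinarith [hM2.1, sq_nonneg (S.α (j+1))]
  have hQ2 : (1+2*S.M (j+2))*S.α (j+1)^2 ≤ 2*S.α (j+1)^2 := by
    nlinarith [hM2.2, sq_nonneg (S.α (j+1))]
  have hPp : 0 < S.Paux (j+1) := adabb_Paux_pos S j
  have hPe : S.P (j+1) = S.Paux (j+1) := by rw [AdaBB.P]; norm_num
  have hw : S.Paux (j+1) ≤ S.α j + S.P j := by
    have h := adabb_P_succ_le S j; rwa [hPe] at h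
  have hcore : (1+2*S.M (j+2))*S.α (j+1)^2*‖S.f' (S.x (j+1))‖^2
      - 2*S.Paux (j+1)*(S.α j * ⟪S.f' (S.x (j+1)), S.f' (S.x j)⟫)
      ≤ 2*S.M (j+1)*(S.α j^2*‖S.f' (S.x j)‖^2) := by
    rcases le_or_gt (S.α j) (S.lam (j+1)) with h1 | h1
    · have hMv : S.M (j+1) = 0 := by rw [AdaBB.M, Nat.add_sub_cancel, if_pos h1]
      have hPv : S.Paux (j+1) = S.α (j+1)^2 / S.α j := by
        rw [AdaBB.Paux, Nat.add_sub_cancel, if_pos h1]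
      have hc := adabb_core1 (S.α j) (S.lam (j+1)) ((1+2*S.M (j+2))*S.α (j+1)^2)
        (S.α (j+1)^2) (‖S.f' (S.x j)‖^2) (‖S.f' (S.x (j+1)) - S.f' (S.x j)‖^2)
        hβ (by positivity) (by positivity) h1 hQ1 hQ2 hcs
      rw [← hba, ← hbs] at hc
      rw [hMv, hPv, ← sub_nonneg]
      have e : 2*(0:ℝ)*(S.α j^2*‖S.f' (S.x j)‖^2)
          - ((1+2*S.M (j+2))*S.α (j+1)^2*‖S.f' (S.x (j+1))‖^2
            - 2*(S.α (j+1)^2/S.α j)*(S.α j * ⟪S.f' (S.x (j+1)), S.f' (S.x j)⟫))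
          = (S.α j*(2*S.α (j+1)^2*(S.α j * ⟪S.f' (S.x (j+1)), S.f' (S.x j)⟫))
            - S.α j*((1+2*S.M (j+2))*S.α (j+1)^2*(S.α j*‖S.f' (S.x (j+1))‖^2)))
            / S.α j^2 := by
        field_simp; ring
      rw [e]
      exact div_nonneg (by linarith [hc]) (by positivity)
    · rcases lt_or_ge (S.α j / 2) (S.lam (j+1)) with h2 | h2
      · have hMv : S.M (j+1) = S.α (j+1)^2/(S.lam (j+1)*S.α j) - S.α (j+1)^2/S.α j^2 := by
          rw [AdaBB.M, Nat.add_sub_cancel, if_neg (not_le.mpr h1), if_pos h2]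
        have hPv : S.Paux (j+1) = 2*S.α (j+1)^2/S.α j - S.α (j+1)^2/S.lam (j+1) := by
          rw [AdaBB.Paux, Nat.add_sub_cancel, if_neg (not_le.mpr h1), if_pos h2]
        have hc := adabb_core2 (S.α j) (S.lam (j+1)) ((1+2*S.M (j+2))*S.α (j+1)^2)
          (S.α (j+1)^2) (‖S.f' (S.x j)‖^2) (‖S.f' (S.x (j+1)) - S.f' (S.x j)‖^2)
          hβ hlm (by positivity) (by positivity) h2 h1 hQ1 hQ2 hcs
        rw [← hba, ← hbs] at hc
        rw [hMv, hPv, ← sub_nonneg]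
        have e : 2*(S.α (j+1)^2/(S.lam (j+1)*S.α j) - S.α (j+1)^2/S.α j^2)
              *(S.α j^2*‖S.f' (S.x j)‖^2)
            - ((1+2*S.M (j+2))*S.α (j+1)^2*‖S.f' (S.x (j+1))‖^2
              - 2*(2*S.α (j+1)^2/S.α j - S.α (j+1)^2/S.lam (j+1))
                *(S.α j * ⟪S.f' (S.x (j+1)), S.f' (S.x j)⟫))
            = (S.α j*(2*S.α (j+1)^2*(S.α j - S.lam (j+1))*(S.α j*‖S.f' (S.x j)‖^2)
                + 2*S.α (j+1)^2*(2*S.lam (j+1) - S.α j)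
                  *(S.α j * ⟪S.f' (S.x (j+1)), S.f' (S.x j)⟫))
              - S.α j*(S.lam (j+1)*((1+2*S.M (j+2))*S.α (j+1)^2
                  *(S.α j*‖S.f' (S.x (j+1))‖^2))))
              / (S.lam (j+1)*S.α j^2) := by
          field_simp; ring
        rw [e]
        exact div_nonneg (by linarith [hc]) (by positivity)
      · have hMv : S.M (j+1) = S.α (j+1)^2/S.lam (j+1)^2 - S.α (j+1)^2/(S.α j*S.lam (j+1)) := by
          rw [AdaBB.M, Nat.add_sub_cancel, if_neg (not_le.mpr h1), if_neg (not_lt.mpr h2)]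
        have hPv : S.Paux (j+1) = S.α (j+1)^2/S.α j := by
          rw [AdaBB.Paux, Nat.add_sub_cancel, if_neg (not_le.mpr h1), if_neg (not_lt.mpr h2)]
        have hc := adabb_core3 (S.α j) (S.lam (j+1)) ((1+2*S.M (j+2))*S.α (j+1)^2)
          (S.α (j+1)^2) (‖S.f' (S.x j)‖^2) (‖S.f' (S.x (j+1)) - S.f' (S.x j)‖^2)
          hβ hlm (by positivity) (by positivity) h2 hQ1 hQ2 (by positivity) hcs
        rw [← hba, ← hbs] at hc
        rw [hMv, hPv, ← sub_nonneg]
        have e : 2*(S.α (j+1)^2/S.lam (j+1)^2 - S.α (j+1)^2/(S.α j*S.lam (j+1)))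
              *(S.α j^2*‖S.f' (S.x j)‖^2)
            - ((1+2*S.M (j+2))*S.α (j+1)^2*‖S.f' (S.x (j+1))‖^2
              - 2*(S.α (j+1)^2/S.α j)*(S.α j * ⟪S.f' (S.x (j+1)), S.f' (S.x j)⟫))
            = (2*S.α (j+1)^2*(S.α j - S.lam (j+1))*S.α j^2*‖S.f' (S.x j)‖^2
                + 2*S.α (j+1)^2*S.lam (j+1)^2*(S.α j * ⟪S.f' (S.x (j+1)), S.f' (S.x j)⟫)
              - S.lam (j+1)^2*((1+2*S.M (j+2))*S.α (j+1)^2*(S.α j*‖S.f' (S.x (j+1))‖^2)))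
              / (S.α j*S.lam (j+1)^2) := by
          field_simp; ring
        rw [e]
        exact div_nonneg (by linarith [hc]) (by positivity)
  -- assemble
  have e2 : ‖S.x (j+2) - S.x (j+1)‖^2 = S.α (j+1)^2*‖S.f' (S.x (j+1))‖^2 := by
    rw [hstep1, norm_neg, norm_smul, mul_pow, Real.norm_eq_abs, sq_abs]
  have e1 : ‖S.x (j+1) - S.x j‖^2 = S.α j^2*‖S.f' (S.x j)‖^2 := by
    rw [hstep0, norm_neg, norm_smul, mul_pow, Real.norm_eq_abs, sq_abs]
  have hU2 : S.Upsilon xs (j+2) = ‖S.x (j+2) - xs‖^2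
      + 2*S.M (j+2)*(S.α (j+1)^2*‖S.f' (S.x (j+1))‖^2)
      + (2*S.α (j+1) + 2*S.P (j+1))*(S.f (S.x (j+1)) - S.f xs) := by
    rw [AdaBB.Upsilon, show j+2-1 = j+1 from rfl, e2]
  have hU1 : S.Upsilon xs (j+1) = ‖S.x (j+1) - xs‖^2
      + 2*S.M (j+1)*(S.α j^2*‖S.f' (S.x j)‖^2)
      + (2*S.α j + 2*S.P j)*(S.f (S.x j) - S.f xs) := by
    rw [AdaBB.Upsilon, show j+1-1 = j from rfl, e1]
  rw [hU2, hU1, hPe]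
  have hs1 : 2*S.α (j+1)*(S.f (S.x (j+1)) - S.f xs)
      ≤ 2*S.α (j+1)*⟪S.f' (S.x (j+1)), S.x (j+1) - xs⟫ :=
    mul_le_mul_of_nonneg_left hsupp (by linarith)
  have hs2 : 2*S.Paux (j+1)*(S.f (S.x (j+1)) - S.f xs)
      ≤ 2*S.Paux (j+1)*(S.f (S.x j) - S.f xs)
        - 2*S.Paux (j+1)*(S.α j * ⟪S.f' (S.x (j+1)), S.f' (S.x j)⟫) := by
    have h := mul_le_mul_of_nonneg_left hf1 (by linarith : (0:ℝ) ≤ 2*S.Paux (j+1))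
    linarith [h]
  have hwΔ : 2*S.Paux (j+1)*(S.f (S.x j) - S.f xs)
      ≤ (2*S.α j + 2*S.P j)*(S.f (S.x j) - S.f xs) :=
    mul_le_mul_of_nonneg_right (by linarith) hΔ0
  nlinarith [hexp, hs1, hs2, hcore, hwΔ]
lemma adabb_upsilon_lb (xs : EuclideanSpace ℝ (Fin n)) (hxs : ∀ y, S.f xs ≤ S.f y) (j : ℕ) :
    ‖S.x (j+1) - xs‖^2 ≤ S.Upsilon xs (j+1) := by
  have hc : 0 ≤ 2*S.α j + 2*S.P j := by
    cases j with
    | zero =>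
      have h := adabb_Paux_pos S 0
      have e : S.P 0 = S.Paux 1 - S.α 0 := by simp [AdaBB.P]
      rw [e]; linarith
    | succ i => linarith [adabb_alpha_pos S (i+1), adabb_P_pos S i]
  rw [AdaBB.Upsilon, show j+1-1 = j from rfl]
  nlinarith [mul_nonneg hc (sub_nonneg.mpr (hxs (S.x j))),
    mul_nonneg (adabb_M_bounds S j).1 (sq_nonneg ‖S.x (j+1) - S.x j‖)]

open scoped RealInnerProductSpace in
set_option maxHeartbeats 1000000 in
lemma adabb_ups1 (xs : EuclideanSpace ℝ (Fin n)) (hxs : ∀ y, S.f xs ≤ S.f y) :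
    S.Upsilon xs 1 ≤ ‖S.x 0 - xs‖^2 + S.α 0^2*(1 + 2*S.M 1)*‖S.f' (S.x 0)‖^2
      + max (2*S.P 1 - 2*S.α 0) 0 * (S.f (S.x 0) - S.f xs) := by
  have hΔ0 : 0 ≤ S.f (S.x 0) - S.f xs := sub_nonneg.mpr (hxs _)
  have hexp : ‖S.x 1 - xs‖^2 = ‖S.x 0 - xs‖^2
      - 2*S.α 0*⟪S.f' (S.x 0), S.x 0 - xs⟫ + S.α 0^2*‖S.f' (S.x 0)‖^2 := by
    have hsub : S.x 1 - xs = (S.x 0 - xs) - S.α 0 • S.f' (S.x 0) := by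
      rw [adabb_step S 0]; abel
    rw [hsub, norm_sub_sq_real, real_inner_smul_right,
      real_inner_comm (S.x 0 - xs) (S.f' (S.x 0)), norm_smul, mul_pow,
      Real.norm_eq_abs, sq_abs]
    ring
  have hsupp : S.f (S.x 0) - S.f xs ≤ ⟪S.f' (S.x 0), S.x 0 - xs⟫ := by
    have h := adabb_support S (S.x 0) xs
    rw [show xs - S.x 0 = -(S.x 0 - xs) by abel, inner_neg_right] at h
    linarith
  have hs1 : 2*S.α 0*(S.f (S.x 0) - S.f xs) ≤ 2*S.α 0*⟪S.f' (S.x 0), S.x 0 - xs⟫ :=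
    mul_le_mul_of_nonneg_left hsupp (by linarith [S.hα0])
  have e1 : ‖S.x 1 - S.x 0‖^2 = S.α 0^2*‖S.f' (S.x 0)‖^2 := by
    rw [show S.x 1 - S.x 0 = -(S.α 0 • S.f' (S.x 0)) by rw [adabb_step S 0]; abel,
      norm_neg, norm_smul, mul_pow, Real.norm_eq_abs, sq_abs]
  have hP0 : S.P 0 = S.Paux 1 - S.α 0 := by rw [AdaBB.P]; simp
  have hP1 : S.P 1 = S.Paux 1 := by rw [AdaBB.P]; norm_num
  have hmax : (2*S.P 1 - 2*S.α 0) * (S.f (S.x 0) - S.f xs)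
      ≤ max (2*S.P 1 - 2*S.α 0) 0 * (S.f (S.x 0) - S.f xs) :=
    mul_le_mul_of_nonneg_right (le_max_left _ _) hΔ0
  have hP1e : (2*S.P 1 - 2*S.α 0)*(S.f (S.x 0) - S.f xs)
      = (2*S.Paux 1 - 2*S.α 0)*(S.f (S.x 0) - S.f xs) := by rw [hP1]
  rw [AdaBB.Upsilon, show 1-1 = 0 from rfl, e1, hP0]
  nlinarith [hexp, hs1, hmax, hP1e]

lemma adabb_ball (xs : EuclideanSpace ℝ (Fin n)) (hxs : ∀ y, S.f xs ≤ S.f y)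
    (R : ℝ) (hR0 : 0 ≤ R)
    (hR2 : R ^ 2 = ‖S.x 0 - xs‖ ^ 2 + S.α 0 ^ 2 * (1 + 2 * S.M 1) * ‖S.f' (S.x 0)‖ ^ 2 +
      max (2 * S.P 1 - 2 * S.α 0) 0 * (S.f (S.x 0) - S.f xs)) :
    ∀ k, ‖S.x k - xs‖ ≤ R := by
  have hups : ∀ j, S.Upsilon xs (j+1) ≤ R^2 := by
    intro j
    induction j with
    | zero => rw [hR2]; exact adabb_ups1 S xs hxs
    | succ i ih => exact le_trans (adabb_upsilon_decrease S xs hxs i) ih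
  intro k
  have hsq : ‖S.x k - xs‖^2 ≤ R^2 := by
    cases k with
    | zero =>
      rw [hR2]
      have hM1 : 0 ≤ S.M 1 := (adabb_M_bounds S 0).1
      nlinarith [mul_nonneg (le_max_right (2*S.P 1 - 2*S.α 0) 0) (sub_nonneg.mpr (hxs (S.x 0))),
        mul_nonneg (mul_nonneg (sq_nonneg (S.α 0)) (by linarith : (0:ℝ) ≤ 1 + 2*S.M 1))
          (sq_nonneg ‖S.f' (S.x 0)‖)]
    | succ j => exact le_trans (adabb_upsilon_lb S xs hxs j) (hups j)
  exact le_of_pow_le_pow_left₀ (by norm_num) hR0 hsq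

open scoped RealInnerProductSpace in
lemma adabb_lam_ge (xs : EuclideanSpace ℝ (Fin n)) (hxs : ∀ y, S.f xs ≤ S.f y)
    (R : ℝ) (hR0 : 0 ≤ R)
    (hR2 : R ^ 2 = ‖S.x 0 - xs‖ ^ 2 + S.α 0 ^ 2 * (1 + 2 * S.M 1) * ‖S.f' (S.x 0)‖ ^ 2 +
      max (2 * S.P 1 - 2 * S.α 0) 0 * (S.f (S.x 0) - S.f xs))
    (L : ℝ) (hL : 0 < L)
    (hcoco : ∀ x y : EuclideanSpace ℝ (Fin n), ‖x - xs‖ ≤ R → ‖y - xs‖ ≤ R →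
      (1 / L) * ‖S.f' x - S.f' y‖ ^ 2 ≤ ⟪S.f' x - S.f' y, x - y⟫) :
    ∀ k, 1/L ≤ S.lam (k+1) := by
  intro k
  have hball := adabb_ball S xs hxs R hR0 hR2
  have hco := hcoco (S.x (k+1)) (S.x k) (hball (k+1)) (hball k)
  rw [← adabb_lam_id S k] at hco
  have htpos : 0 < ‖S.f' (S.x (k+1)) - S.f' (S.x k)‖^2 := by
    have h := sub_ne_zero.mpr (S.hne k)
    exact pow_pos (norm_pos_iff.mpr h) 2
  exact le_of_mul_le_mul_right (by linarith) htpos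
lemma adabb_sqrt_ge_one (k : ℕ) : 1 ≤ Real.sqrt (1 + S.θ k) := by
  rw [show (1:ℝ) = Real.sqrt 1 by simp]
  apply Real.sqrt_le_sqrt
  have : 0 ≤ S.θ k := adabb_theta_nonneg S k
  rw [Real.sqrt_one]
  linarith

lemma adabb_inv (L : ℝ) (hL : 0 < L) (hlamge : ∀ k, 1/L ≤ S.lam (k+1))
    (hθ0 : S.θ 0 = if Real.sqrt 2 * S.α 0 ≤ S.lam 1
      then S.lam 1 ^ 2 / (2 * S.α 0 ^ 2) - 1 else 0) :
    ∀ i, (S.α i ≤ S.lam (i+1) ∨ (S.α i / 2 < S.lam (i+1) ∧ S.lam (i+1) < S.α i)) →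
      (1/L)^2 ≤ (1 + S.θ (i+1)) * S.α (i+1)^2 := by
  have hI2 : ∀ i, S.α i / 2 < S.lam (i+1) → S.lam (i+1) < S.α i →
      (1/L)^2 ≤ (1 + S.θ (i+1)) * S.α (i+1)^2 := by
    intro i h2 h3
    have hge := adabb_case2_ge S i h2 h3
    have h1 : 1/L ≤ S.α (i+1) := le_trans (hlamge i) hge
    have h2' : (1/L)^2 ≤ S.α (i+1)^2 := pow_le_pow_left₀ (by positivity) h1 2
    nlinarith [mul_nonneg (adabb_theta_nonneg S (i+1)) (sq_nonneg (S.α (i+1)))]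
  intro i
  induction i with
  | zero =>
    rintro (h | ⟨h2, h3⟩)
    · obtain ⟨ha, hθ⟩ := S.hcase1 0 h
      have hθ0nn := S.hθ0
      have hα0 := S.hα0
      have hsq : S.α 1^2 = (1+S.θ 0)*S.α 0^2 := by
        rw [ha, mul_pow, Real.sq_sqrt (by linarith)]
      have hθ1 : S.θ 1 = Real.sqrt (1+S.θ 0) := by
        rw [hθ, ha, mul_div_cancel_right₀ _ (ne_of_gt hα0)]
      have h1s : (1:ℝ) ≤ Real.sqrt (1+S.θ 0) := adabb_sqrt_ge_one S 0
      have hkey : S.lam 1^2 ≤ 2*(1+S.θ 0)*S.α 0^2 := by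
        by_cases hsp : Real.sqrt 2 * S.α 0 ≤ S.lam 1
        · rw [hθ0, if_pos hsp]
          have e : 2*(1 + (S.lam 1^2/(2*S.α 0^2) - 1))*S.α 0^2 = S.lam 1^2 := by
            field_simp; ring
          linarith [e]
        · push_neg at hsp
          have h2 : S.lam 1^2 ≤ (Real.sqrt 2 * S.α 0)^2 :=
            pow_le_pow_left₀ (S.hlampos 0).le hsp.le 2
          rw [mul_pow, Real.sq_sqrt (by norm_num)] at h2
          rw [hθ0, if_neg (not_le.mpr hsp)]
          linarith
      have hl2 : (1/L)^2 ≤ S.lam 1^2 := pow_le_pow_left₀ (by positivity) (hlamge 0) 2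
      rw [hθ1, hsq]
      nlinarith [mul_nonneg (by linarith : (0:ℝ) ≤ 1+S.θ 0) (sq_nonneg (S.α 0))]
    · exact hI2 0 h2 h3
  | succ i ih =>
    rintro (h | ⟨h2, h3⟩)
    · obtain ⟨ha, hθ⟩ := S.hcase1 (i+1) h
      have hαi := adabb_alpha_pos S (i+1)
      have hθi := adabb_theta_nonneg S (i+1)
      have hsq : S.α (i+2)^2 = (1+S.θ (i+1))*S.α (i+1)^2 := by
        rw [ha, mul_pow, Real.sq_sqrt (by linarith)]
      have hθ2 : S.θ (i+2) = Real.sqrt (1+S.θ (i+1)) := by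
        rw [hθ, ha, mul_div_cancel_right₀ _ (ne_of_gt hαi)]
      have h1s : (1:ℝ) ≤ Real.sqrt (1+S.θ (i+1)) := adabb_sqrt_ge_one S (i+1)
      rw [hθ2, hsq]
      rcases le_or_gt (S.α i) (S.lam (i+1)) with hc | hc
      · have hIH := ih (Or.inl hc)
        nlinarith [mul_nonneg (by linarith : (0:ℝ) ≤ 1+S.θ (i+1)) (sq_nonneg (S.α (i+1)))]
      · rcases lt_or_ge (S.α i / 2) (S.lam (i+1)) with hc2 | hc2
        · have hIH := ih (Or.inr ⟨hc2, hc⟩)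
          nlinarith [mul_nonneg (by linarith : (0:ℝ) ≤ 1+S.θ (i+1)) (sq_nonneg (S.α (i+1)))]
        · have hge := adabb_case3_ge S i hc2
          have hl1 : 1/L ≤ S.lam (i+1) := hlamge i
          have haux : S.lam (i+1)^2 ≤ 2*S.α (i+1)^2 := by
            have h4 : (S.lam (i+1)/Real.sqrt 2)^2 ≤ S.α (i+1)^2 :=
              pow_le_pow_left₀ (div_nonneg (S.hlampos i).le (Real.sqrt_nonneg 2)) hge 2
            rw [div_pow, Real.sq_sqrt (by norm_num)] at h4
            have hlp := S.hlampos i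
            rw [div_le_iff₀ (by norm_num)] at h4
            linarith
          have hl2 : (1/L)^2 ≤ S.lam (i+1)^2 := pow_le_pow_left₀ (by positivity) hl1 2
          nlinarith [mul_nonneg hθi (sq_nonneg (S.α (i+1))), h1s, sq_nonneg (S.α (i+1)),
            mul_nonneg (mul_nonneg hθi hθi) (sq_nonneg (S.α (i+1)))]
    · exact hI2 (i+1) h2 h3

end Aux

open scoped RealInnerProductSpace in
/-- Lemma 4.2: with the initial ratio `θ_0` chosen adaptively, the AdaBB stepsizes satisfy:
(a) if `i ∈ I_2` then `α_i ≥ 1/L`; (b) if `i+1 ∈ I_3` then `α_i ≥ 2/L` and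
`α_i + α_{i+1} ≥ (4+√2)/(2L)`; (c) if `i ∈ I_1 ∪ I_2` and `i+1 ∈ I_1` then `α_{i+1} ≥ 1/L`;
(d) if `i ∈ I_3` then `α_{i-1} + α_i + α_{i+1} ≥ (2+√2)/L`.
Here `I_1 = {k ≥ 1 : λ_k ≥ α_{k-1}}`, `I_2 = {k ≥ 1 : α_{k-1}/2 < λ_k < α_{k-1}}`,
`I_3 = {k ≥ 1 : λ_k ≤ α_{k-1}/2}`. -/
theorem adabb_est (n : ℕ) (S : AdaBB n)
    (xs : EuclideanSpace ℝ (Fin n)) (hxs : ∀ y, S.f xs ≤ S.f y)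
    (R : ℝ) (hR0 : 0 ≤ R)
    (hR2 : R ^ 2 = ‖S.x 0 - xs‖ ^ 2 + S.α 0 ^ 2 * (1 + 2 * S.M 1) * ‖S.f' (S.x 0)‖ ^ 2 +
      max (2 * S.P 1 - 2 * S.α 0) 0 * (S.f (S.x 0) - S.f xs))
    (L : ℝ) (hL : 0 < L)
    (hcoco : ∀ x y : EuclideanSpace ℝ (Fin n), ‖x - xs‖ ≤ R → ‖y - xs‖ ≤ R →
      (1 / L) * ‖S.f' x - S.f' y‖ ^ 2 ≤ ⟪S.f' x - S.f' y, x - y⟫)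
    (hθ0 : S.θ 0 = if Real.sqrt 2 * S.α 0 ≤ S.lam 1
      then S.lam 1 ^ 2 / (2 * S.α 0 ^ 2) - 1 else 0) :
    (∀ i : ℕ, 1 ≤ i → S.α (i - 1) / 2 < S.lam i → S.lam i < S.α (i - 1) → 1 / L ≤ S.α i) ∧
    (∀ i : ℕ, S.lam (i + 1) ≤ S.α i / 2 →
      2 / L ≤ S.α i ∧ (4 + Real.sqrt 2) / (2 * L) ≤ S.α i + S.α (i + 1)) ∧
    (∀ i : ℕ, 1 ≤ i →
      (S.α (i - 1) ≤ S.lam i ∨ (S.α (i - 1) / 2 < S.lam i ∧ S.lam i < S.α (i - 1))) →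
      S.α i ≤ S.lam (i + 1) → 1 / L ≤ S.α (i + 1)) ∧
    (∀ i : ℕ, 1 ≤ i → S.lam i ≤ S.α (i - 1) / 2 →
      (2 + Real.sqrt 2) / L ≤ S.α (i - 1) + S.α i + S.α (i + 1)) := by
  have hlamge := adabb_lam_ge S xs hxs R hR0 hR2 L hL hcoco
  have hL0 : L ≠ 0 := ne_of_gt hL
  have hs2 : Real.sqrt 2 * Real.sqrt 2 = 2 := Real.mul_self_sqrt (by norm_num)
  have hs2p : (0:ℝ) < Real.sqrt 2 := Real.sqrt_pos.mpr (by norm_num)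
  have hb2 : ∀ i, S.lam (i+1) ≤ S.α i / 2 → Real.sqrt 2/(2*L) ≤ S.α (i+1) := by
    intro i h3
    have hge := adabb_case3_ge S i h3
    have hl1 : 1/L ≤ S.lam (i+1) := hlamge i
    have e : Real.sqrt 2/(2*L) = (1/L)/Real.sqrt 2 := by
      rw [div_eq_div_iff (by positivity) (ne_of_gt hs2p)]
      field_simp
      exact Real.sq_sqrt (by norm_num)
    rw [e]
    calc (1/L)/Real.sqrt 2 ≤ S.lam (i+1)/Real.sqrt 2 := by gcongr
    _ ≤ S.α (i+1) := hge
  have h2Lfact : ∀ i, S.lam (i+1) ≤ S.α i / 2 → 2/L ≤ S.α i := by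
    intro i h3
    have hl1 : 1/L ≤ S.lam (i+1) := hlamge i
    calc 2/L = 2*(1/L) := by ring
    _ ≤ 2*S.lam (i+1) := by linarith
    _ ≤ S.α i := by linarith
  refine ⟨?_, ?_, ?_, ?_⟩
  · intro i hi h2 h3
    cases i with
    | zero => omega
    | succ j =>
      simp only [Nat.add_sub_cancel] at h2 h3
      exact le_trans (hlamge j) (adabb_case2_ge S j h2 h3)
  · intro i h3
    refine ⟨h2Lfact i h3, ?_⟩
    have hb := hb2 i h3
    have e2 : (4+Real.sqrt 2)/(2*L) = 2/L + Real.sqrt 2/(2*L) := by ring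
    rw [e2]
    linarith [h2Lfact i h3, hb]
  · intro i hi hcase hnext
    cases i with
    | zero => omega
    | succ j =>
      simp only [Nat.add_sub_cancel] at hcase
      have hinv := adabb_inv S L hL hlamge hθ0 j hcase
      obtain ⟨ha, -⟩ := S.hcase1 (j+1) hnext
      have hsq : S.α (j+2)^2 = (1+S.θ (j+1))*S.α (j+1)^2 := by
        rw [ha, mul_pow, Real.sq_sqrt (by linarith [adabb_theta_nonneg S (j+1)])]
      have h5 : (1/L)^2 ≤ S.α (j+2)^2 := by rw [hsq]; exact hinv
      exact le_of_pow_le_pow_left₀ (by norm_num) (adabb_alpha_pos S (j+2)).le h5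
  · intro i hi h3
    cases i with
    | zero => omega
    | succ j =>
      simp only [Nat.add_sub_cancel] at h3 ⊢
      have h2L : 2/L ≤ S.α j := h2Lfact j h3
      have hb := hb2 j h3
      have hnext : Real.sqrt 2/(2*L) ≤ S.α (j+2) := by
        rcases le_or_gt (S.α (j+1)) (S.lam (j+2)) with hc | hc
        · obtain ⟨ha, -⟩ := S.hcase1 (j+1) hc
          have h1s := adabb_sqrt_ge_one S (j+1)
          have hmono : S.α (j+1) ≤ S.α (j+2) := by
            rw [ha]; nlinarith [adabb_alpha_pos S (j+1)]
          linarith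
        · rcases lt_or_ge (S.α (j+1) / 2) (S.lam (j+2)) with hc2 | hc2
          · have h6 := le_trans (hlamge (j+1)) (adabb_case2_ge S (j+1) hc2 hc)
            have e3 : Real.sqrt 2/(2*L) ≤ 1/L := by
              rw [div_le_div_iff₀ (by positivity) hL]
              nlinarith
            linarith
          · exact hb2 (j+1) hc2
      have e4 : (2+Real.sqrt 2)/L = 2/L + Real.sqrt 2/(2*L) + Real.sqrt 2/(2*L) := by
        ring
      rw [e4]
      linarith
end
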